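/- arXiv:2201.12293 — 4 statements merged into one kernel-verified Lean document; each statement's English description precedes it below -/
import Mathlib

section
/- For the logistic loss: suppose x₁,…,xₙ are linearly independent and the GRW weights satisfy Assumption 1. Then there exists η₀ > 0 such that for every learning rate 0 < η ≤ η₀, the normalized iterates θ^{(t)} / ‖θ^{(t)}‖₂ converge as t → ∞ to the unique max-margin classifier u; in particular the limiting direction does not depend on the weights qᵢ^{(t)}. -/
open scoped RealInnerProductSpace
open Filter
set_option maxHeartbeats 1000000


noncomputable def sg (z : ℝ) : ℝ := (1 + Real.exp z)⁻¹
noncomputable def lg (z : ℝ) : ℝ := Real.log (1 + Real.exp (-z))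

lemma one_add_exp_pos (z : ℝ) : 0 < 1 + Real.exp z := by positivity

lemma sg_pos (z : ℝ) : 0 < sg z := by
  unfold sg; positivity

lemma sg_lt_one (z : ℝ) : sg z < 1 := by
  unfold sg
  rw [inv_lt_one_iff₀]
  right; nlinarith [Real.exp_pos z]

lemma sg_eq (z : ℝ) : sg z = Real.exp (-z) / (1 + Real.exp (-z)) := by
  unfold sg
  rw [Real.exp_neg]
  have h := Real.exp_pos z
  field_simp
  ring

lemma sg_le_exp_neg (z : ℝ) : sg z ≤ Real.exp (-z) := by
  unfold sg
  rw [Real.exp_neg]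
  have h := Real.exp_pos z
  rw [inv_le_inv₀ (by linarith) h]
  linarith

lemma exp_neg_le_two_sg {z : ℝ} (hz : 0 ≤ z) : Real.exp (-z) ≤ 2 * sg z := by
  have h1 : Real.exp (-z) ≤ 1 := Real.exp_le_one_iff.2 (by linarith)
  have h2 : Real.exp (-z) * Real.exp z = 1 := by
    rw [← Real.exp_add]; simp
  have h3 := one_add_exp_pos z
  unfold sg
  rw [inv_eq_one_div, mul_one_div, le_div_iff₀ h3]
  nlinarith

lemma sg_anti : Antitone sg := by
  intro a b hab
  unfold sg
  have := Real.exp_pos a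
  apply inv_anti₀ (by linarith)
  have := Real.exp_le_exp.2 hab
  linarith

lemma hasDerivAt_sg (z : ℝ) : HasDerivAt sg (-(sg z * (1 - sg z))) z := by
  have h1 : HasDerivAt (fun w : ℝ => 1 + Real.exp w) (Real.exp z) z :=
    (Real.hasDerivAt_exp z).const_add 1
  have h2 := h1.inv (by positivity)
  refine h2.congr_deriv ?_
  have h3 := one_add_exp_pos z
  unfold sg
  field_simp
  ring

lemma hasDerivAt_lg (z : ℝ) : HasDerivAt lg (-(sg z)) z := by
  have h1 : HasDerivAt (fun w : ℝ => Real.exp (-w)) (Real.exp (-z) * (-1)) z := by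
    exact (Real.hasDerivAt_exp (-z)).comp z ((hasDerivAt_id z).neg)
  have h2 : HasDerivAt (fun w : ℝ => 1 + Real.exp (-w)) (Real.exp (-z) * (-1)) z :=
    h1.const_add 1
  have h3 : (0:ℝ) < 1 + Real.exp (-z) := by positivity
  have h4 := (Real.hasDerivAt_log h3.ne').comp z h2
  refine h4.congr_deriv ?_
  rw [sg_eq]
  field_simp

lemma sg_deriv_bound (w : ℝ) : ‖-(sg w * (1 - sg w))‖ ≤ 1/4 := by
  have h1 := sg_pos w
  have h2 := sg_lt_one w
  rw [Real.norm_eq_abs, abs_neg, abs_of_nonneg (by nlinarith)]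
  nlinarith [sq_nonneg (2 * sg w - 1)]

lemma sg_lipschitz (a b : ℝ) : |sg b - sg a| ≤ (1/4) * |b - a| := by
  have := Convex.norm_image_sub_le_of_norm_hasDerivWithin_le
    (f := sg) (f' := fun w => -(sg w * (1 - sg w))) (s := Set.univ)
    (fun w _ => (hasDerivAt_sg w).hasDerivWithinAt)
    (fun w _ => sg_deriv_bound w) convex_univ (Set.mem_univ a) (Set.mem_univ b)
  simpa [Real.norm_eq_abs] using this

lemma sg_lipschitz_loc {z : ℝ} (hz : 0 ≤ z) {a b : ℝ} (ha : z - 1 ≤ a) (hb : z - 1 ≤ b) :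
    |sg b - sg a| ≤ (6 * sg z) * |b - a| := by
  have key : ∀ w ∈ Set.Ici (z - 1), ‖-(sg w * (1 - sg w))‖ ≤ 6 * sg z := by
    intro w hw
    have h1 := sg_pos w
    have h2 := sg_lt_one w
    have h3 : sg w * (1 - sg w) ≤ sg w := by nlinarith
    have h4 : sg w ≤ Real.exp (-w) := sg_le_exp_neg w
    have h5 : Real.exp (-w) ≤ Real.exp 1 * Real.exp (-z) := by
      rw [← Real.exp_add]
      exact Real.exp_le_exp.2 (by simp at hw ⊢; linarith)
    have h6 : Real.exp (-z) ≤ 2 * sg z := exp_neg_le_two_sg hz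
    have h7 : Real.exp 1 < 3 := by
      have := Real.exp_one_lt_d9
      linarith
    have h8 := Real.exp_pos (-z)
    have h9 := sg_pos z
    rw [Real.norm_eq_abs, abs_neg, abs_of_nonneg (by nlinarith)]
    nlinarith
  have := Convex.norm_image_sub_le_of_norm_hasDerivWithin_le
    (f := sg) (f' := fun w => -(sg w * (1 - sg w))) (s := Set.Ici (z-1))
    (fun w _ => (hasDerivAt_sg w).hasDerivWithinAt)
    key (convex_Ici _) (Set.mem_Ici.2 ha) (Set.mem_Ici.2 hb)
  simpa [Real.norm_eq_abs] using this

lemma lg_taylor (K z h : ℝ) (hK : 0 ≤ K)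
    (hlip : ∀ t, |t| ≤ |h| → |sg (z + t) - sg z| ≤ K) :
    lg (z + h) ≤ lg z - sg z * h + K * |h| := by
  set g : ℝ → ℝ := fun t => lg (z + t) + sg z * t with hg
  have hd : ∀ t, HasDerivAt g (-(sg (z + t)) + sg z) t := by
    intro t
    have h1 : HasDerivAt (fun t : ℝ => lg (z + t)) (-(sg (z + t))) t := by
      have := (hasDerivAt_lg (z + t)).comp t ((hasDerivAt_id t).const_add z)
      rw [mul_one] at this
      exact this
    have h2 := h1.add ((hasDerivAt_id t).const_mul (sg z))
    rw [mul_one] at h2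
    exact h2
  have bound : ∀ t ∈ Set.Icc (-|h|) (|h|), ‖-(sg (z + t)) + sg z‖ ≤ K := by
    intro t ht
    have : |t| ≤ |h| := abs_le.2 ⟨ht.1, ht.2⟩
    have := hlip t this
    rw [Real.norm_eq_abs]
    rw [abs_sub_comm] at this
    convert this using 2
    ring
  have h0 : (0:ℝ) ∈ Set.Icc (-|h|) (|h|) := by
    constructor <;> simp [abs_nonneg]
  have hh : h ∈ Set.Icc (-|h|) (|h|) := by
    constructor
    · exact neg_abs_le h
    · exact le_abs_self h
  have := Convex.norm_image_sub_le_of_norm_hasDerivWithin_le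
    (f := g) (f' := fun t => -(sg (z + t)) + sg z) (s := Set.Icc (-|h|) (|h|))
    (fun w _ => (hd w).hasDerivWithinAt) bound (convex_Icc _ _) h0 hh
  have hg0 : g 0 = lg z := by simp [hg]
  have hgh : g h = lg (z + h) + sg z * h := rfl
  rw [hg0, hgh] at this
  simp only [sub_zero, Real.norm_eq_abs] at this
  have := (abs_le.1 this).2
  linarith

lemma lg_taylor_global (z h : ℝ) : lg (z + h) ≤ lg z - sg z * h + (1/4) * h^2 := by
  have := lg_taylor ((1/4) * |h|) z h (by positivity)
    (fun t ht => le_trans (sg_lipschitz z (z + t)) (by simp; linarith))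
  calc lg (z + h) ≤ lg z - sg z * h + (1/4 * |h|) * |h| := this
    _ = lg z - sg z * h + (1/4) * h^2 := by rw [mul_assoc, ← abs_mul, ← sq, abs_sq]

lemma lg_taylor_loc {z : ℝ} (hz : 0 ≤ z) {h : ℝ} (hh : |h| ≤ 1) :
    lg (z + h) ≤ lg z - sg z * h + (6 * sg z) * h^2 := by
  have key : ∀ t, |t| ≤ |h| → |sg (z + t) - sg z| ≤ (6 * sg z) * |h| := by
    intro t ht
    have habs : |t| ≤ 1 := le_trans ht hh
    have h1 : z - 1 ≤ z + t := by
      have := (abs_le.1 habs).1; linarith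
    have := sg_lipschitz_loc hz (a := z) (b := z + t) (by linarith) h1
    simp only [add_sub_cancel_left] at this
    calc |sg (z + t) - sg z| ≤ 6 * sg z * |t| := this
      _ ≤ 6 * sg z * |h| := by
          have := sg_pos z
          apply mul_le_mul_of_nonneg_left ht (by positivity)
  have := lg_taylor ((6 * sg z) * |h|) z h (by have := sg_pos z; positivity) key
  calc lg (z + h) ≤ lg z - sg z * h + (6 * sg z * |h|) * |h| := this
    _ = lg z - sg z * h + (6 * sg z) * h^2 := by rw [mul_assoc, ← abs_mul, ← sq, abs_sq]

lemma lg_pos (z : ℝ) : 0 < lg z := by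
  unfold lg
  apply Real.log_pos
  have := Real.exp_pos (-z); linarith

lemma lg_le_exp_neg (z : ℝ) : lg z ≤ Real.exp (-z) := by
  unfold lg
  have h := Real.exp_pos (-z)
  have := Real.log_le_sub_one_of_pos (x := 1 + Real.exp (-z)) (by linarith)
  linarith

lemma sg_le_lg (z : ℝ) : sg z ≤ lg z := by
  have hx := Real.exp_pos (-z)
  have h1 : (0:ℝ) < (1 + Real.exp (-z))⁻¹ := by positivity
  have h2 := Real.log_le_sub_one_of_pos h1
  rw [Real.log_inv] at h2
  have h3 : (1 + Real.exp (-z))⁻¹ - 1 = -(Real.exp (-z) / (1 + Real.exp (-z))) := by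
    field_simp
    ring
  rw [h3] at h2
  rw [sg_eq]
  unfold lg at *
  linarith

lemma lg_lower {z : ℝ} (hz : 0 ≤ z) : (1 - 2 * sg z) * lg z ≤ sg z := by
  have hx := Real.exp_pos (-z)
  have hx1 : Real.exp (-z) ≤ 1 := Real.exp_le_one_iff.2 (by linarith)
  have h1 : lg z ≤ Real.exp (-z) := lg_le_exp_neg z
  have h2 : 0 < lg z := lg_pos z
  have h3 : Real.exp (-z) ≤ 2 * sg z := exp_neg_le_two_sg hz
  have h4 : sg z = Real.exp (-z) / (1 + Real.exp (-z)) := sg_eq z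
  rcases le_or_gt (1 - 2 * sg z) 0 with hc | hc
  · have := sg_pos z
    nlinarith
  · have h5 : (1 - 2 * sg z) * lg z ≤ (1 - Real.exp (-z)) * lg z := by nlinarith
    have h6 : (1 - Real.exp (-z)) * lg z ≤ (1 - Real.exp (-z)) * Real.exp (-z) := by nlinarith
    have h7 : (1 - Real.exp (-z)) * Real.exp (-z) ≤ sg z := by
      rw [h4, le_div_iff₀ (by linarith)]
      nlinarith [mul_pos (mul_pos hx hx) hx]
    linarith

open scoped RealInnerProductSpace

lemma exists_dual_vec {d n : ℕ} (x : Fin n → EuclideanSpace ℝ (Fin d))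
    (hli : LinearIndependent ℝ x) (y : Fin n → ℝ) :
    ∃ θ : EuclideanSpace ℝ (Fin d), ∀ i, ⟪θ, x i⟫ = y i := by
  set G : Matrix (Fin n) (Fin n) ℝ := Matrix.of fun i j => ⟪x i, x j⟫ with hG
  have hinner : ∀ (c : Fin n → ℝ) (i : Fin n),
      ⟪x i, ∑ j, c j • x j⟫ = G.mulVec c i := by
    intro c i
    rw [inner_sum]
    simp only [real_inner_smul_right]
    rw [Matrix.mulVec]
    simp [hG, dotProduct, mul_comm]
  have hinj : Function.Injective G.mulVecLin := by
    rw [← LinearMap.ker_eq_bot, LinearMap.ker_eq_bot']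
    intro c hc
    have hc' : G.mulVec c = 0 := hc
    have hv : (∑ j, c j • x j) = 0 := by
      rw [← inner_self_eq_zero (𝕜 := ℝ)]
      rw [sum_inner]
      simp only [real_inner_smul_left]
      have : ∀ i ∈ Finset.univ, c i * ⟪x i, ∑ j, c j • x j⟫ = 0 := by
        intro i _
        rw [hinner c i, hc']
        simp
      rw [Finset.sum_congr rfl this]
      simp
    funext i
    exact Fintype.linearIndependent_iff.1 hli c hv i
  have hsurj : Function.Surjective G.mulVecLin :=
    (LinearMap.injective_iff_surjective).1 hinj
  obtain ⟨c, hc⟩ := hsurj y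
  refine ⟨∑ j, c j • x j, fun i => ?_⟩
  rw [real_inner_comm, hinner c i]
  exact congrFun hc i


lemma perstep_arith (γ ε w η N A gn E E' IP ρ ρ' : ℝ)
    (hγpos : 0 < γ) (hγ1 : γ ≤ 1) (hε : 0 < ε) (hεγ : ε ≤ γ) (hw : w = ε/100)
    (hη : 0 < η) (hη2 : η ≤ 1/2)
    (hN0 : 0 ≤ N) (hNA : N ≤ A) (hNgA : γ * A ≤ N)
    (hA0 : 0 ≤ A) (hAw : A ≤ w) (hAE : (1-w) * E ≤ A) (hAleE : A ≤ E)
    (hE : 0 < E) (hE' : 0 < E')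
    (hgn : 0 ≤ gn) (hgle : gn ≤ (1+w) * N)
    (hdesc : E' ≤ E - IP + 6 * (η*gn)^2 * A)
    (hIP : η * ((1-w) * N^2) ≤ IP)
    (hρd : ρ' - ρ ≤ η * gn) :
    (γ - ε) * (ρ' - ρ) ≤ (-Real.log E') - (-Real.log E) := by
  have hw0 : 0 < w := by rw [hw]; positivity
  have hw1 : w ≤ 1/100 := by rw [hw]; linarith
  have hNw : N ≤ w := le_trans hNA hAw
  -- second order term control
  have h6 : 6 * (η*gn)^2 * A ≤ η * (4*w*N^2) := by
    have h1 : gn^2 ≤ (1+w)^2 * N^2 := by nlinarith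
    have h2 : (η*gn)^2 ≤ η^2 * ((1+w)^2 * N^2) := by
      have : (η*gn)^2 = η^2 * gn^2 := by ring
      rw [this]
      nlinarith [sq_nonneg η]
    have h3 : 6 * (η*gn)^2 * A ≤ 6 * (η^2 * ((1+w)^2 * N^2)) * w := by
      nlinarith [sq_nonneg (η*gn), sq_nonneg η, sq_nonneg ((1+w)*N)]
    have h4 : 6 * (η^2 * ((1+w)^2 * N^2)) * w ≤ η * (4*w*N^2) := by
      have h5 : 6 * η * (1+w)^2 ≤ 4 := by nlinarith
      nlinarith [mul_nonneg (mul_nonneg hη.le hw0.le) (sq_nonneg N), sq_nonneg N,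
        mul_le_mul_of_nonneg_right h5 (mul_nonneg (mul_nonneg hη.le hw0.le) (sq_nonneg N))]
    linarith
  have hdesc2 : E' ≤ E - η * ((1-5*w) * N^2) := by
    have hr : η * ((1-5*w)*N^2) = η*((1-w)*N^2) - η*(4*w*N^2) := by ring
    linarith
  set xx : ℝ := η * ((1-5*w)*N^2) / E with hxxdef
  have hnum0 : 0 ≤ η * ((1-5*w) * N^2) := by
    apply mul_nonneg hη.le
    nlinarith [sq_nonneg N]
  have hxx0 : 0 ≤ xx := div_nonneg hnum0 hE.le
  have hxx1 : xx < 1 := by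
    rw [hxxdef, div_lt_one hE]
    have h1 : N^2 ≤ A * A := by nlinarith
    have h2 : A * A ≤ w * E := by nlinarith
    nlinarith [sq_nonneg N]
  have hφstep : xx ≤ (-Real.log E') - (-Real.log E) := by
    have hEL1 : E' ≤ E * (1 - xx) := by
      have : E * (1 - xx) = E - η * ((1-5*w)*N^2) := by
        rw [hxxdef]; field_simp
      rw [this]; exact hdesc2
    have hpos1 : (0:ℝ) < 1 - xx := by linarith
    have hlog1 : Real.log E' ≤ Real.log (E * (1 - xx)) := by
      rw [Real.log_le_log_iff hE' (mul_pos hE hpos1)]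
      exact hEL1
    have hlog2 : Real.log (E * (1 - xx)) = Real.log E + Real.log (1 - xx) :=
      Real.log_mul hE.ne' hpos1.ne'
    have hlog3 : Real.log (1 - xx) ≤ -xx := by
      have := Real.log_le_sub_one_of_pos hpos1
      linarith
    rw [hlog2] at hlog1
    linarith
  rcases le_or_gt (ρ' - ρ) 0 with hneg | hpos
  · have h1 : (γ - ε) * (ρ' - ρ) ≤ 0 :=
      mul_nonpos_of_nonneg_of_nonpos (by linarith) hneg
    linarith
  · have hkey2 : (γ - ε) * (1 + w) * E ≤ (1 - 5*w) * N := by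
    -- need γ - ε + w ≤ γ - 6w ⟺ ε ≥ 7w ✓ since w = ε/100
      have hNE : γ * ((1-w) * E) ≤ N := by
        calc γ * ((1-w) * E) ≤ γ * A := by nlinarith
          _ ≤ N := hNgA
      have h1 : (γ - ε) * (1 + w) ≤ γ - ε + w := by nlinarith
      have h2 : γ - ε + w ≤ γ - 6*w := by
        have : ε = 100 * w := by rw [hw]; ring
        linarith
      have h3 : γ - 6*w ≤ (1 - 5*w) * (γ * (1-w)) := by nlinarith
      calc (γ - ε) * (1 + w) * E ≤ (γ - 6*w) * E := by nlinarith
        _ ≤ (1 - 5*w) * (γ * (1-w)) * E := by nlinarith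
        _ = (1 - 5*w) * (γ * ((1-w) * E)) := by ring
        _ ≤ (1 - 5*w) * N := by nlinarith [hNE]
    have hratio : (γ - ε) * (η * ((1+w) * N)) ≤ xx := by
      rw [hxxdef, le_div_iff₀ hE]
      calc (γ - ε) * (η * ((1+w) * N)) * E
          = (η * N) * ((γ - ε) * (1 + w) * E) := by ring
        _ ≤ (η * N) * ((1 - 5*w) * N) := by
            apply mul_le_mul_of_nonneg_left hkey2 (by positivity)
        _ = η * ((1 - 5*w) * N^2) := by ring
    have h9 : ρ' - ρ ≤ η * ((1+w) * N) := by
      calc ρ' - ρ ≤ η * gn := hρd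
        _ ≤ η * ((1+w) * N) := mul_le_mul_of_nonneg_left hgle hη.le
    have h10 : (γ - ε) * (ρ' - ρ) ≤ (γ - ε) * (η * ((1+w) * N)) :=
      mul_le_mul_of_nonneg_left h9 (by linarith)
    linarith

lemma small_arith (η w N A gn : ℝ) (hη : 0 < η) (hη2 : η ≤ 1/2) (hgn : 0 ≤ gn)
    (hgle : gn ≤ (1+w) * N) (hN0 : 0 ≤ N) (hNA : N ≤ A) (hAw : A ≤ w)
    (hw0 : 0 < w) (hw1 : w ≤ 1/100) : η * gn ≤ 1 := by
  nlinarith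

/-- For the logistic loss, linearly independent data, and GRW
weights satisfying Assumption 1, there exists `η₀ > 0` such that for every
learning rate `0 < η ≤ η₀`, the normalized GRW iterates `θ^{(t)}/‖θ^{(t)}‖`
converge to the (unique) max-margin classifier `u` — independently of the
weights. -/
theorem stmt_12 {d n : ℕ} (hn : 0 < n)
    (x : Fin n → EuclideanSpace ℝ (Fin d)) (hx : ∀ i, ‖x i‖ ≤ 1)
    (y : Fin n → ℝ) (hy : ∀ i, y i = 1 ∨ y i = -1)
    (hli : LinearIndependent ℝ x)
    (q : ℕ → Fin n → ℝ)
    (hq0 : ∀ t i, 0 ≤ q t i)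
    (hq1 : ∀ t, ∑ i, q t i = 1)
    (qlim : Fin n → ℝ)
    (hqlim : ∀ i, Tendsto (fun t => q t i) atTop (nhds (qlim i)))
    (hqpos : ∀ i, 0 < qlim i)
    (u : EuclideanSpace ℝ (Fin d)) (hu : ‖u‖ = 1)
    (humax : ∀ v : EuclideanSpace ℝ (Fin d), ‖v‖ = 1 →
      (⨅ i, y i * ⟪v, x i⟫) ≤ ⨅ i, y i * ⟪u, x i⟫) :
    ∃ η₀ > (0 : ℝ), ∀ η : ℝ, 0 < η → η ≤ η₀ →
      ∀ θ : ℕ → EuclideanSpace ℝ (Fin d),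
        (∀ t, θ (t + 1) = θ t
          + η • ∑ i, (q t i * y i / (1 + Real.exp (y i * ⟪θ t, x i⟫))) • x i) →
        Tendsto (fun t => ‖θ t‖⁻¹ • θ t) atTop (nhds u) := by
  haveI : Nonempty (Fin n) := ⟨⟨0, hn⟩⟩
  have hy1 : ∀ i, y i * y i = 1 := by
    intro i; rcases hy i with h | h <;> rw [h] <;> norm_num
  have hyabs : ∀ i, |y i| = 1 := by
    intro i; rcases hy i with h | h <;> rw [h] <;> norm_num
  -- margin value γ
  set γ : ℝ := ⨅ i, y i * ⟪u, x i⟫ with hγdef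
  have hbdd : ∀ v : EuclideanSpace ℝ (Fin d),
      BddBelow (Set.range fun i => y i * ⟪v, x i⟫) := fun v => Set.Finite.bddBelow (Set.finite_range _)
  have hγ_le : ∀ i, γ ≤ y i * ⟪u, x i⟫ := fun i => ciInf_le (hbdd u) i
  -- inner products bounded by norms
  have hip : ∀ (v : EuclideanSpace ℝ (Fin d)) i, |y i * ⟪v, x i⟫| ≤ ‖v‖ := by
    intro v i
    rw [abs_mul, hyabs, one_mul]
    calc |⟪v, x i⟫| ≤ ‖v‖ * ‖x i‖ := abs_real_inner_le_norm _ _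
      _ ≤ ‖v‖ * 1 := by
          apply mul_le_mul_of_nonneg_left (hx i) (norm_nonneg v)
      _ = ‖v‖ := mul_one _
  -- γ > 0 via linear independence
  have hγpos : 0 < γ := by
    obtain ⟨θs, hθs⟩ := exists_dual_vec x hli y
    have hmargin : ∀ i, y i * ⟪θs, x i⟫ = 1 := by
      intro i; rw [hθs i, hy1 i]
    have hθs0 : θs ≠ 0 := by
      intro h
      have := hmargin ⟨0, hn⟩
      rw [h] at this
      simp at this
    have hns : 0 < ‖θs‖ := norm_pos_iff.2 hθs0
    have hv : ‖(‖θs‖⁻¹ • θs)‖ = 1 := by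
      rw [norm_smul, norm_inv, norm_norm, inv_mul_cancel₀ hns.ne']
    have := humax _ hv
    have heq : ∀ i, y i * ⟪‖θs‖⁻¹ • θs, x i⟫ = ‖θs‖⁻¹ := by
      intro i
      rw [real_inner_smul_left]
      rw [← mul_assoc, mul_comm (y i) _, mul_assoc, hmargin i, mul_one]
    have hinf : (⨅ i, y i * ⟪‖θs‖⁻¹ • θs, x i⟫) = ‖θs‖⁻¹ := by
      rw [funext heq]; exact ciInf_const
    rw [hinf] at this
    calc (0:ℝ) < ‖θs‖⁻¹ := by positivity
      _ ≤ γ := this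
  have hγ1 : γ ≤ 1 := by
    have h1 := hγ_le ⟨0, hn⟩
    have h2 := hip u ⟨0, hn⟩
    rw [hu] at h2
    calc γ ≤ _ := h1
      _ ≤ 1 := (abs_le.1 h2).2
  -- minimum limit weight
  set qs : ℝ := Finset.univ.inf' (Finset.univ_nonempty) qlim with hqsdef
  have hqs_le : ∀ i, qs ≤ qlim i := fun i => Finset.inf'_le _ (Finset.mem_univ i)
  have hqs_pos : 0 < qs := by
    rw [hqsdef, Finset.lt_inf'_iff]
    exact fun i _ => hqpos i
  have hqlim_sum : ∑ i, qlim i = 1 := by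
    have h1 : Tendsto (fun t => ∑ i, q t i) atTop (nhds (∑ i, qlim i)) :=
      tendsto_finset_sum _ (fun i _ => hqlim i)
    have h2 : Tendsto (fun t => ∑ i, q t i) atTop (nhds 1) := by
      simp only [hq1]; exact tendsto_const_nhds
    exact tendsto_nhds_unique h1 h2
  have hqlim_le_one : ∀ i, qlim i ≤ 1 := by
    intro i
    rw [← hqlim_sum]
    exact Finset.single_le_sum (fun j _ => (hqpos j).le) (Finset.mem_univ i)
  -- uniqueness of the max-margin direction
  have huniq : ∀ v : EuclideanSpace ℝ (Fin d), ‖v‖ = 1 →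
      (∀ i, γ ≤ y i * ⟪v, x i⟫) → v = u := by
    intro v hv hvγ
    by_contra hne
    have hin : ⟪u, v⟫ < 1 := by
      have h1 : 0 < ‖u - v‖ := norm_pos_iff.2 (sub_ne_zero.2 (Ne.symm hne))
      have h2 : ‖u - v‖^2 = 2 - 2*⟪u, v⟫ := by
        rw [@norm_sub_sq_real, hu, hv]; ring
      nlinarith [h1]
    set m : EuclideanSpace ℝ (Fin d) := (2:ℝ)⁻¹ • (u + v) with hm
    have hmnorm : ‖m‖ < 1 := by
      have h2 : ‖u + v‖^2 = 2 + 2*⟪u, v⟫ := by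
        rw [@norm_add_sq_real, hu, hv]; ring
      have h3 : ‖u + v‖ < 2 := by nlinarith [norm_nonneg (u+v)]
      rw [hm, norm_smul]
      rw [Real.norm_eq_abs]
      rw [abs_of_pos (by norm_num : (0:ℝ) < 2⁻¹)]
      linarith
    have hmmarg : ∀ i, γ ≤ y i * ⟪m, x i⟫ := by
      intro i
      rw [hm, real_inner_smul_left, inner_add_left]
      have h1 := hγ_le i
      have h2 := hvγ i
      have h3 : y i * ((2:ℝ)⁻¹ * (⟪u, x i⟫ + ⟪v, x i⟫)) =
          (2:ℝ)⁻¹ * (y i * ⟪u, x i⟫) + (2:ℝ)⁻¹ * (y i * ⟪v, x i⟫) := by ring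
      rw [h3]
      linarith
    have hm0 : m ≠ 0 := by
      intro h
      have h1 := hmmarg ⟨0, hn⟩
      rw [h] at h1
      simp at h1
      linarith
    have hmn_pos : 0 < ‖m‖ := norm_pos_iff.2 hm0
    have hv2 : ‖(‖m‖⁻¹ • m)‖ = 1 := by
      rw [norm_smul, norm_inv, norm_norm, inv_mul_cancel₀ hmn_pos.ne']
    have h5 := humax _ hv2
    have h6 : ∀ i, ‖m‖⁻¹ * γ ≤ y i * ⟪‖m‖⁻¹ • m, x i⟫ := by
      intro i
      rw [real_inner_smul_left]
      have h7 := hmmarg i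
      have h8 : (0:ℝ) < ‖m‖⁻¹ := by positivity
      calc ‖m‖⁻¹ * γ ≤ ‖m‖⁻¹ * (y i * ⟪m, x i⟫) := mul_le_mul_of_nonneg_left h7 h8.le
        _ = y i * (‖m‖⁻¹ * ⟪m, x i⟫) := by ring
    have h9 : ‖m‖⁻¹ * γ ≤ γ := le_trans (le_ciInf h6) h5
    have h11 : ‖m‖ * (‖m‖⁻¹ * γ) ≤ ‖m‖ * γ := mul_le_mul_of_nonneg_left h9 hmn_pos.le
    have h12 : ‖m‖ * (‖m‖⁻¹ * γ) = γ := by field_simp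
    have h13 : ‖m‖ * γ < 1 * γ := mul_lt_mul_of_pos_right hmnorm hγpos
    rw [h12] at h11
    rw [one_mul] at h13
    linarith
  refine ⟨1/2, by norm_num, ?_⟩
  intro η hη hη2 θ hrec
  -- basic definitions
  set Z : ℕ → Fin n → ℝ := fun t i => y i * ⟪θ t, x i⟫ with hZdef
  set G : ℕ → EuclideanSpace ℝ (Fin d) :=
    fun t => ∑ i, (q t i * sg (Z t i)) • (y i • x i) with hGdef
  set Gb : ℕ → EuclideanSpace ℝ (Fin d) :=
    fun t => ∑ i, (qlim i * sg (Z t i)) • (y i • x i) with hGbdef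
  set A : ℕ → ℝ := fun t => ∑ i, qlim i * sg (Z t i) with hAdef
  set EL : ℕ → ℝ := fun t => ∑ i, qlim i * lg (Z t i) with hELdef
  have hstep : ∀ t, θ (t + 1) = θ t + η • G t := by
    intro t
    rw [hrec t]
    have : (∑ i, (q t i * y i / (1 + Real.exp (y i * ⟪θ t, x i⟫))) • x i) = G t := by
      simp only [hGdef]
      apply Finset.sum_congr rfl
      intro i _
      rw [smul_smul]
      congr 1
      rw [hZdef]
      unfold sg
      field_simp
    rw [this]
  have hδnorm : ∀ t, ‖η • G t‖ = η * ‖G t‖ := by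
    intro t
    rw [norm_smul, Real.norm_eq_abs, abs_of_pos hη]
  have hnorm_gen : ∀ c : Fin n → ℝ, ‖∑ i, c i • (y i • x i)‖ ≤ ∑ i, |c i| := by
    intro c
    calc ‖∑ i, c i • (y i • x i)‖ ≤ ∑ i, ‖c i • (y i • x i)‖ := norm_sum_le _ _
      _ ≤ ∑ i, |c i| := by
          apply Finset.sum_le_sum
          intro i _
          rw [norm_smul, norm_smul, Real.norm_eq_abs, Real.norm_eq_abs, hyabs i, one_mul]
          calc |c i| * ‖x i‖ ≤ |c i| * 1 :=
                mul_le_mul_of_nonneg_left (hx i) (abs_nonneg _)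
            _ = |c i| := mul_one _
  have hGb_norm : ∀ t, ‖Gb t‖ ≤ A t := by
    intro t
    calc ‖Gb t‖ ≤ ∑ i, |qlim i * sg (Z t i)| := hnorm_gen _
      _ = A t := by
          simp only [hAdef]
          apply Finset.sum_congr rfl
          intro i _
          exact abs_of_nonneg (mul_nonneg (hqpos i).le (sg_pos _).le)
  have hGdiff : ∀ t (w : ℝ), (∀ i, |q t i - qlim i| ≤ w) → ‖G t - Gb t‖ ≤ (w / qs) * A t := by
    intro t w hw
    have heq : G t - Gb t = ∑ i, ((q t i - qlim i) * sg (Z t i)) • (y i • x i) := by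
      simp only [hGdef, hGbdef, ← Finset.sum_sub_distrib]
      apply Finset.sum_congr rfl
      intro i _
      rw [← sub_smul]
      congr 1
      ring
    rw [heq]
    calc ‖∑ i, ((q t i - qlim i) * sg (Z t i)) • (y i • x i)‖
        ≤ ∑ i, |(q t i - qlim i) * sg (Z t i)| := hnorm_gen _
      _ ≤ ∑ i, (w / qs) * (qlim i * sg (Z t i)) := by
          apply Finset.sum_le_sum
          intro i _
          rw [abs_mul, abs_of_nonneg (sg_pos _).le]
          have h1 : |q t i - qlim i| * sg (Z t i) ≤ w * sg (Z t i) :=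
            mul_le_mul_of_nonneg_right (hw i) (sg_pos _).le
          have h2 : qs * sg (Z t i) ≤ qlim i * sg (Z t i) :=
            mul_le_mul_of_nonneg_right (hqs_le i) (sg_pos _).le
          rw [div_mul_eq_mul_div, le_div_iff₀ hqs_pos]
          have hw0 : 0 ≤ w := le_trans (abs_nonneg _) (hw ⟨0, hn⟩)
          nlinarith [sg_pos (Z t i), abs_nonneg (q t i - qlim i),
            mul_le_mul_of_nonneg_right h1 hqs_pos.le,
            mul_le_mul_of_nonneg_left h2 hw0]
      _ = (w / qs) * A t := by rw [hAdef, ← Finset.mul_sum]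
  have hA_nonneg : ∀ t, 0 ≤ A t :=
    fun t => Finset.sum_nonneg fun i _ => mul_nonneg (hqpos i).le (sg_pos _).le
  have hA_le_one : ∀ t, A t ≤ 1 := by
    intro t
    calc A t ≤ ∑ i, qlim i := by
          apply Finset.sum_le_sum
          intro i _
          nlinarith [sg_pos (Z t i), sg_lt_one (Z t i), hqpos i]
      _ = 1 := hqlim_sum
  have hA_le_EL : ∀ t, A t ≤ EL t := by
    intro t
    apply Finset.sum_le_sum
    intro i _
    exact mul_le_mul_of_nonneg_left (sg_le_lg _) (hqpos i).le
  have hEL_pos : ∀ t, 0 < EL t := by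
    intro t
    apply Finset.sum_pos (fun i _ => mul_pos (hqpos i) (lg_pos _)) Finset.univ_nonempty
  have hGb_inner : ∀ t (δ : EuclideanSpace ℝ (Fin d)),
      ⟪Gb t, δ⟫ = ∑ i, (qlim i * sg (Z t i)) * (y i * ⟪δ, x i⟫) := by
    intro t δ
    simp only [hGbdef]
    rw [sum_inner]
    apply Finset.sum_congr rfl
    intro i _
    rw [real_inner_smul_left, real_inner_smul_left, real_inner_comm]
  have hGu : ∀ t, γ * A t ≤ ⟪Gb t, u⟫ := by
    intro t
    rw [hGb_inner t u, hAdef, Finset.mul_sum]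
    apply Finset.sum_le_sum
    intro i _
    have h1 : 0 ≤ qlim i * sg (Z t i) := mul_nonneg (hqpos i).le (sg_pos _).le
    have := mul_le_mul_of_nonneg_left (hγ_le i) h1
    calc γ * (qlim i * sg (Z t i)) = (qlim i * sg (Z t i)) * γ := by ring
      _ ≤ _ := this
  have hGb_ge : ∀ t, γ * A t ≤ ‖Gb t‖ := by
    intro t
    calc γ * A t ≤ ⟪Gb t, u⟫ := hGu t
      _ ≤ ‖Gb t‖ * ‖u‖ := real_inner_le_norm _ _
      _ = ‖Gb t‖ := by rw [hu, mul_one]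
  have hZadd : ∀ t i, Z (t+1) i = Z t i + y i * ⟪η • G t, x i⟫ := by
    intro t i
    simp only [hZdef]
    rw [hstep t, inner_add_left]
    ring
  have hh_le : ∀ t i, |y i * ⟪η • G t, x i⟫| ≤ η * ‖G t‖ := by
    intro t i
    have := hip (η • G t) i
    rwa [hδnorm t] at this
  have hEL_taylor : ∀ (t : ℕ) (K : Fin n → ℝ),
      (∀ i, lg (Z t i + y i * ⟪η • G t, x i⟫) ≤
        lg (Z t i) - sg (Z t i) * (y i * ⟪η • G t, x i⟫) + K i) →
      EL (t+1) ≤ EL t - ⟪Gb t, η • G t⟫ + ∑ i, qlim i * K i := by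
    intro t K hK
    have heq : EL (t+1) = ∑ i, qlim i * lg (Z t i + y i * ⟪η • G t, x i⟫) := by
      simp only [hELdef]
      apply Finset.sum_congr rfl
      intro i _
      rw [hZadd t i]
    rw [heq, hGb_inner t (η • G t)]
    have hsum : ∑ i, qlim i * lg (Z t i + y i * ⟪η • G t, x i⟫) ≤
        ∑ i, (qlim i * lg (Z t i) -
          (qlim i * sg (Z t i)) * (y i * ⟪η • G t, x i⟫) + qlim i * K i) := by
      apply Finset.sum_le_sum
      intro i _
      have := mul_le_mul_of_nonneg_left (hK i) (hqpos i).le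
      nlinarith [this]
    calc ∑ i, qlim i * lg (Z t i + y i * ⟪η • G t, x i⟫) ≤ _ := hsum
      _ = EL t - (∑ i, (qlim i * sg (Z t i)) * (y i * ⟪η • G t, x i⟫))
          + ∑ i, qlim i * K i := by
          rw [Finset.sum_add_distrib, Finset.sum_sub_distrib, hELdef]
  have hstep_glob : ∀ t, EL (t+1) ≤ EL t - ⟪Gb t, η • G t⟫ + (1/4) * (η * ‖G t‖)^2 := by
    intro t
    have h1 : EL (t+1) ≤ EL t - ⟪Gb t, η • G t⟫
        + ∑ i, qlim i * ((1/4) * (y i * ⟪η • G t, x i⟫)^2) :=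
      hEL_taylor t _ (fun i => lg_taylor_global (Z t i) _)
    calc EL (t+1) ≤ EL t - ⟪Gb t, η • G t⟫
          + ∑ i, qlim i * ((1/4) * (y i * ⟪η • G t, x i⟫)^2) := h1
      _ ≤ EL t - ⟪Gb t, η • G t⟫ + ∑ i, qlim i * ((1/4) * (η * ‖G t‖)^2) := by
          have : ∀ i ∈ Finset.univ, qlim i * ((1/4) * (y i * ⟪η • G t, x i⟫)^2) ≤
              qlim i * ((1/4) * (η * ‖G t‖)^2) := by
            intro i _
            apply mul_le_mul_of_nonneg_left _ (hqpos i).le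
            have h2 := hh_le t i
            have h3 := abs_nonneg (y i * ⟪η • G t, x i⟫)
            nlinarith [sq_abs (y i * ⟪η • G t, x i⟫)]
          linarith [Finset.sum_le_sum this]
      _ = EL t - ⟪Gb t, η • G t⟫ + (1/4) * (η * ‖G t‖)^2 := by
          rw [← Finset.sum_mul, hqlim_sum, one_mul]
  have hstep_loc : ∀ t, (∀ i, 0 ≤ Z t i) → η * ‖G t‖ ≤ 1 →
      EL (t+1) ≤ EL t - ⟪Gb t, η • G t⟫ + 6 * (η * ‖G t‖)^2 * A t := by
    intro t hZ0 hsmall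
    have h1 : EL (t+1) ≤ EL t - ⟪Gb t, η • G t⟫
        + ∑ i, qlim i * (6 * sg (Z t i) * (y i * ⟪η • G t, x i⟫)^2) :=
      hEL_taylor t _ (fun i => lg_taylor_loc (hZ0 i) (le_trans (hh_le t i) hsmall))
    calc EL (t+1) ≤ EL t - ⟪Gb t, η • G t⟫
          + ∑ i, qlim i * (6 * sg (Z t i) * (y i * ⟪η • G t, x i⟫)^2) := h1
      _ ≤ EL t - ⟪Gb t, η • G t⟫
          + ∑ i, (qlim i * sg (Z t i)) * (6 * (η * ‖G t‖)^2) := by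
          have : ∀ i ∈ Finset.univ, qlim i * (6 * sg (Z t i) * (y i * ⟪η • G t, x i⟫)^2) ≤
              (qlim i * sg (Z t i)) * (6 * (η * ‖G t‖)^2) := by
            intro i _
            have h2 := hh_le t i
            have h3 := abs_nonneg (y i * ⟪η • G t, x i⟫)
            have h4 := sg_pos (Z t i)
            have h5 := (hqpos i).le
            have h6 : (y i * ⟪η • G t, x i⟫)^2 ≤ (η * ‖G t‖)^2 := by
              nlinarith [sq_abs (y i * ⟪η • G t, x i⟫)]
            nlinarith [mul_le_mul_of_nonneg_left h6 (mul_nonneg h5 h4.le)]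
          linarith [Finset.sum_le_sum this]
      _ = EL t - ⟪Gb t, η • G t⟫ + 6 * (η * ‖G t‖)^2 * A t := by
          rw [← Finset.sum_mul, hAdef]
          ring
  -- eventual closeness of weights
  have hqev : ∀ w : ℝ, 0 < w → ∀ᶠ t in atTop, ∀ i, |q t i - qlim i| ≤ w := by
    intro w hw
    rw [Filter.eventually_all]
    intro i
    have h1 := (hqlim i)
    rw [Metric.tendsto_atTop] at h1
    obtain ⟨N, hN⟩ := h1 w hw
    filter_upwards [Filter.eventually_ge_atTop N] with t ht
    have := hN t ht
    rw [Real.dist_eq] at this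
    exact this.le
  -- Phase 2 : eventual descent
  have hdescent : ∀ᶠ t in atTop, EL (t+1) ≤ EL t - (η/2) * ‖Gb t‖^2 := by
    filter_upwards [hqev (qs * γ / 4) (by positivity)] with t hqt
    have hd := hGdiff t _ hqt
    have hd' : ‖G t - Gb t‖ ≤ (1/4) * ‖Gb t‖ := by
      have h1 : (qs * γ / 4) / qs * A t = (γ/4) * A t := by
        field_simp
      have h2 : γ * A t ≤ ‖Gb t‖ := hGb_ge t
      calc ‖G t - Gb t‖ ≤ (qs * γ / 4) / qs * A t := hd
        _ = (γ/4) * A t := h1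
        _ ≤ (1/4) * ‖Gb t‖ := by nlinarith [hA_nonneg t]
    have hginner : η * ((3/4) * ‖Gb t‖^2) ≤ ⟪Gb t, η • G t⟫ := by
      rw [real_inner_smul_right]
      have h1 : ⟪Gb t, G t⟫ = ‖Gb t‖^2 + ⟪Gb t, G t - Gb t⟫ := by
        rw [inner_sub_right, real_inner_self_eq_norm_sq]
        ring
      have h2 : |⟪Gb t, G t - Gb t⟫| ≤ ‖Gb t‖ * ((1/4) * ‖Gb t‖) := by
        calc |⟪Gb t, G t - Gb t⟫| ≤ ‖Gb t‖ * ‖G t - Gb t‖ := abs_real_inner_le_norm _ _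
          _ ≤ ‖Gb t‖ * ((1/4) * ‖Gb t‖) :=
              mul_le_mul_of_nonneg_left hd' (norm_nonneg _)
      have h3 := (abs_le.1 h2).1
      have h4 : (3/4) * ‖Gb t‖^2 ≤ ⟪Gb t, G t⟫ := by
        rw [h1]; nlinarith
      exact mul_le_mul_of_nonneg_left h4 hη.le
    have hgnorm : ‖G t‖ ≤ (5/4) * ‖Gb t‖ := by
      calc ‖G t‖ = ‖Gb t + (G t - Gb t)‖ := by rw [add_sub_cancel]
        _ ≤ ‖Gb t‖ + ‖G t - Gb t‖ := norm_add_le _ _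
        _ ≤ (5/4) * ‖Gb t‖ := by linarith
    have h5 := hstep_glob t
    have hG2 : ‖G t‖^2 ≤ (25/16) * ‖Gb t‖^2 := by
      nlinarith [norm_nonneg (G t), norm_nonneg (Gb t), hgnorm]
    have h6 : (1/4) * (η * ‖G t‖)^2 ≤ (25/64) * η^2 * ‖Gb t‖^2 := by
      nlinarith [mul_le_mul_of_nonneg_left hG2 (sq_nonneg η)]
    have hη3 : η^2 ≤ η/2 := by nlinarith [mul_le_mul_of_nonneg_left hη2 hη.le]
    have h7 : (25/64) * η^2 * ‖Gb t‖^2 ≤ (25/128) * η * ‖Gb t‖^2 := by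
      nlinarith [mul_le_mul_of_nonneg_right hη3 (sq_nonneg (‖Gb t‖))]
    have h8 : (25/128) * η * ‖Gb t‖^2 ≤ (1/4) * η * ‖Gb t‖^2 := by
      nlinarith [mul_nonneg hη.le (sq_nonneg (‖Gb t‖))]
    linarith
  obtain ⟨N₀, hN₀⟩ := Filter.eventually_atTop.1 hdescent
  have hGbn : Tendsto (fun t => ‖Gb t‖) atTop (nhds 0) := by
    set f : ℕ → ℝ := fun k => EL (N₀ + k) with hfdef
    have hanti : Antitone f := by
      apply antitone_nat_of_succ_le
      intro k
      have h1 := hN₀ (N₀ + k) (Nat.le_add_right _ _)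
      have h2 : N₀ + k + 1 = N₀ + (k + 1) := by ring
      rw [h2] at h1
      nlinarith [sq_nonneg (‖Gb (N₀ + k)‖)]
    have hbddf : BddBelow (Set.range f) := by
      refine ⟨0, ?_⟩
      rintro r ⟨k, rfl⟩
      exact (hEL_pos _).le
    have htendf := tendsto_atTop_ciInf hanti hbddf
    have hshift : Tendsto (fun k => f (k + 1)) atTop (nhds (⨅ k, f k)) :=
      htendf.comp (tendsto_add_atTop_nat 1)
    have hdiff0 : Tendsto (fun k => f k - f (k + 1)) atTop (nhds 0) := by
      have := htendf.sub hshift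
      simpa using this
    have hGb2 : Tendsto (fun k => ‖Gb (N₀ + k)‖^2) atTop (nhds 0) := by
      apply squeeze_zero (fun k => sq_nonneg _) (g := fun k => (2/η) * (f k - f (k+1)))
      · intro k
        have h1 := hN₀ (N₀ + k) (Nat.le_add_right _ _)
        have h2 : N₀ + k + 1 = N₀ + (k + 1) := by ring
        rw [h2] at h1
        have h3 : f (k+1) ≤ f k - (η/2) * ‖Gb (N₀ + k)‖^2 := h1
        have h4 : (η/2) * ‖Gb (N₀ + k)‖^2 ≤ f k - f (k+1) := by linarith
        calc ‖Gb (N₀ + k)‖^2 = (2/η) * ((η/2) * ‖Gb (N₀ + k)‖^2) := by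
              field_simp
          _ ≤ (2/η) * (f k - f (k+1)) := by
              apply mul_le_mul_of_nonneg_left h4 (by positivity)
      · have := hdiff0.const_mul (2/η)
        simpa using this
    have hGbk : Tendsto (fun k => ‖Gb (N₀ + k)‖) atTop (nhds 0) := by
      have h1 : Tendsto (fun k => Real.sqrt (‖Gb (N₀ + k)‖^2)) atTop (nhds (Real.sqrt 0)) :=
        (Real.continuous_sqrt.tendsto 0).comp hGb2
      rw [Real.sqrt_zero] at h1
      convert h1 using 2 with k
      rw [Real.sqrt_sq (norm_nonneg _)]
    rw [← tendsto_add_atTop_iff_nat N₀]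
    simpa [add_comm] using hGbk
  have hA0 : Tendsto A atTop (nhds 0) := by
    apply squeeze_zero hA_nonneg (g := fun t => ‖Gb t‖ / γ)
    · intro t
      rw [le_div_iff₀ hγpos]
      calc A t * γ = γ * A t := mul_comm _ _
        _ ≤ ‖Gb t‖ := hGb_ge t
    · have := hGbn.div_const γ
      simpa using this
  have hsg0 : ∀ i, Tendsto (fun t => sg (Z t i)) atTop (nhds 0) := by
    intro i
    apply squeeze_zero (fun t => (sg_pos _).le) (g := fun t => A t / qs)
    · intro t
      rw [le_div_iff₀ hqs_pos]
      calc sg (Z t i) * qs = qs * sg (Z t i) := mul_comm _ _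
        _ ≤ qlim i * sg (Z t i) := mul_le_mul_of_nonneg_right (hqs_le i) (sg_pos _).le
        _ ≤ A t := by
            apply Finset.single_le_sum
              (f := fun j => qlim j * sg (Z t j))
              (fun j _ => mul_nonneg (hqpos j).le (sg_pos _).le) (Finset.mem_univ i)
    · have := hA0.div_const qs
      simpa using this
  have hZinf : ∀ i, Tendsto (fun t => Z t i) atTop atTop := by
    intro i
    rw [tendsto_atTop]
    intro M
    have h1 : ∀ᶠ t in atTop, sg (Z t i) < sg M := by
      apply (hsg0 i).eventually_lt_const (sg_pos M)
    filter_upwards [h1] with t ht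
    by_contra hc
    push_neg at hc
    exact absurd (sg_anti hc.le) (not_le.2 ht)
  have hρinf : Tendsto (fun t => ‖θ t‖) atTop atTop := by
    apply tendsto_atTop_mono _ (hZinf ⟨0, hn⟩)
    intro t
    exact le_trans (le_abs_self _) (hip (θ t) ⟨0, hn⟩)
  -- Phase 3 : margin of normalized iterates tends to γ
  set φf : ℕ → ℝ := fun t => -Real.log (EL t) with hφdef
  have hρdiff : ∀ t, ‖θ (t+1)‖ - ‖θ t‖ ≤ η * ‖G t‖ := by
    intro t
    have h1 : θ (t+1) - θ t = η • G t := by rw [hstep t]; abel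
    calc ‖θ (t+1)‖ - ‖θ t‖ ≤ ‖θ (t+1) - θ t‖ := norm_sub_norm_le _ _
      _ = η * ‖G t‖ := by rw [h1, hδnorm t]
  have hKEY : ∀ ε : ℝ, 0 < ε → ε ≤ γ →
      ∀ᶠ T in atTop, ∀ i, γ - 2*ε ≤ y i * ⟪‖θ T‖⁻¹ • θ T, x i⟫ := by
    intro ε hε hεγ
    set w : ℝ := ε/100 with hwdef
    have hw : 0 < w := by positivity
    have hw1 : w ≤ 1/100 := by rw [hwdef]; linarith
    have hper : ∀ᶠ t in atTop, ((γ - ε) * (‖θ (t+1)‖ - ‖θ t‖) ≤ φf (t+1) - φf t) ∧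
        (∀ i, 1 ≤ Z t i) := by
      have hsgev : ∀ᶠ t in atTop, ∀ i, sg (Z t i) ≤ w/2 := by
        rw [Filter.eventually_all]
        intro i
        filter_upwards [(hsg0 i).eventually_lt_const (show (0:ℝ) < w/2 by positivity)]
          with t ht using ht.le
      have hZev : ∀ᶠ t in atTop, ∀ i, 1 ≤ Z t i := by
        rw [Filter.eventually_all]
        intro i
        exact (hZinf i).eventually_ge_atTop 1
      have hAev : ∀ᶠ t in atTop, A t ≤ w :=
        (hA0.eventually_lt_const hw).mono (fun t ht => ht.le)
      filter_upwards [hqev (w * qs * γ) (by positivity), hsgev, hZev, hAev]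
        with t hqt hsgt hZt hAt
      refine ⟨?_, hZt⟩
      have hN0 : (0:ℝ) ≤ ‖Gb t‖ := norm_nonneg _
      have hE : 0 < EL t := hEL_pos t
      have hAE : (1 - w) * EL t ≤ A t := by
        calc (1 - w) * EL t = ∑ i, qlim i * ((1 - w) * lg (Z t i)) := by
              rw [hELdef, Finset.mul_sum]
              apply Finset.sum_congr rfl
              intro i _
              ring
          _ ≤ ∑ i, qlim i * sg (Z t i) := by
              apply Finset.sum_le_sum
              intro i _
              apply mul_le_mul_of_nonneg_left _ (hqpos i).le
              have hz0 : (0:ℝ) ≤ Z t i := le_trans zero_le_one (hZt i)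
              have h1 := lg_lower hz0
              have h2 : (1 - w) * lg (Z t i) ≤ (1 - 2 * sg (Z t i)) * lg (Z t i) := by
                have := hsgt i
                nlinarith [lg_pos (Z t i)]
              linarith
          _ = A t := rfl
      have hdGb : ‖G t - Gb t‖ ≤ w * ‖Gb t‖ := by
        have h1 := hGdiff t _ hqt
        have h2 : w * qs * γ / qs * A t = w * (γ * A t) := by
          field_simp
        calc ‖G t - Gb t‖ ≤ w * qs * γ / qs * A t := h1
          _ = w * (γ * A t) := h2
          _ ≤ w * ‖Gb t‖ := mul_le_mul_of_nonneg_left (hGb_ge t) hw.le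
      have hGle : ‖G t‖ ≤ (1 + w) * ‖Gb t‖ := by
        calc ‖G t‖ = ‖Gb t + (G t - Gb t)‖ := by rw [add_sub_cancel]
          _ ≤ ‖Gb t‖ + ‖G t - Gb t‖ := norm_add_le _ _
          _ ≤ (1 + w) * ‖Gb t‖ := by linarith
      have hsmall : η * ‖G t‖ ≤ 1 :=
        small_arith η w (‖Gb t‖) (A t) (‖G t‖) hη hη2 (norm_nonneg _) hGle hN0
          (hGb_norm t) hAt hw hw1
      have hinner : η * ((1 - w) * ‖Gb t‖^2) ≤ ⟪Gb t, η • G t⟫ := by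
        rw [real_inner_smul_right]
        apply mul_le_mul_of_nonneg_left _ hη.le
        have h1 : ⟪Gb t, G t⟫ = ‖Gb t‖^2 + ⟪Gb t, G t - Gb t⟫ := by
          rw [inner_sub_right, real_inner_self_eq_norm_sq]
          ring
        have h2 : |⟪Gb t, G t - Gb t⟫| ≤ ‖Gb t‖ * (w * ‖Gb t‖) := by
          calc |⟪Gb t, G t - Gb t⟫| ≤ ‖Gb t‖ * ‖G t - Gb t‖ := abs_real_inner_le_norm _ _
            _ ≤ ‖Gb t‖ * (w * ‖Gb t‖) := mul_le_mul_of_nonneg_left hdGb hN0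
        have h3 := (abs_le.1 h2).1
        have h4 : ‖Gb t‖ * (w * ‖Gb t‖) = w * ‖Gb t‖^2 := by ring
        rw [h1]
        rw [h4] at h3
        linarith
      exact perstep_arith γ ε w η (‖Gb t‖) (A t) (‖G t‖) (EL t) (EL (t+1))
        (⟪Gb t, η • G t⟫) (‖θ t‖) (‖θ (t+1)‖)
        hγpos hγ1 hε hεγ hwdef hη hη2 hN0 (hGb_norm t) (hGb_ge t) (hA_nonneg t)
        hAt hAE (hA_le_EL t) hE (hEL_pos (t+1)) (norm_nonneg _) hGle
        (hstep_loc t (fun i => le_trans zero_le_one (hZt i)) hsmall) hinner (hρdiff t)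
    obtain ⟨N₁, hN₁⟩ := Filter.eventually_atTop.1 hper
    have htel : ∀ T, N₁ ≤ T → (γ - ε) * (‖θ T‖ - ‖θ N₁‖) ≤ φf T - φf N₁ := by
      intro T hT
      induction T, hT using Nat.le_induction with
      | base => simp
      | succ T hT ih =>
          have h1 := (hN₁ T hT).1
          have h2 : (γ-ε)*(‖θ (T+1)‖ - ‖θ N₁‖) =
              (γ-ε)*(‖θ T‖ - ‖θ N₁‖) + (γ-ε)*(‖θ (T+1)‖ - ‖θ T‖) := by ring
          linarith
    have hzφ : ∀ T, N₁ ≤ T → ∀ i, φf T + Real.log (qs/2) ≤ Z T i := by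
      intro T hT i
      have hZ1 := (hN₁ T hT).2 i
      have h1 : qs/2 * Real.exp (-(Z T i)) ≤ EL T := by
        calc qs/2 * Real.exp (-(Z T i)) ≤ qlim i * sg (Z T i) := by
              have h2 : Real.exp (-(Z T i)) ≤ 2 * sg (Z T i) :=
                exp_neg_le_two_sg (by linarith)
              have h3 := hqs_le i
              have h4 := sg_pos (Z T i)
              have h5 := hqs_pos
              nlinarith
          _ ≤ ∑ j, qlim j * sg (Z T j) :=
              Finset.single_le_sum (f := fun j => qlim j * sg (Z T j))
                (fun j _ => mul_nonneg (hqpos j).le (sg_pos _).le) (Finset.mem_univ i)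
          _ = A T := rfl
          _ ≤ EL T := hA_le_EL T
      have hqse : (0:ℝ) < qs/2 * Real.exp (-(Z T i)) := by positivity
      have h6 : Real.log (qs/2 * Real.exp (-(Z T i))) ≤ Real.log (EL T) :=
        (Real.log_le_log_iff hqse (hEL_pos T)).2 h1
      rw [Real.log_mul (by positivity) (Real.exp_ne_zero _), Real.log_exp] at h6
      simp only [hφdef]
      linarith
    have hC : ∀ T, N₁ ≤ T → ∀ i,
        (γ - ε) * ‖θ T‖ - ((γ-ε) * ‖θ N₁‖ - φf N₁ - Real.log (qs/2)) ≤ Z T i := by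
      intro T hT i
      have h1 := htel T hT
      have h2 := hzφ T hT i
      have h3 : (γ-ε)*(‖θ T‖ - ‖θ N₁‖) = (γ-ε)*‖θ T‖ - (γ-ε)*‖θ N₁‖ := by ring
      rw [h3] at h1
      clear_value γ qs φf
      linarith [h1, h2]
    set C : ℝ := (γ-ε) * ‖θ N₁‖ - φf N₁ - Real.log (qs/2) with hCdef
    have hρbig : ∀ᶠ T in atTop, max 1 (|C|/ε) ≤ ‖θ T‖ := hρinf.eventually_ge_atTop _
    filter_upwards [hρbig, Filter.eventually_ge_atTop N₁] with T hρT hT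
    intro i
    have h1 := hC T hT i
    have hρ1 : (1:ℝ) ≤ ‖θ T‖ := le_trans (le_max_left _ _) hρT
    have hρpos : (0:ℝ) < ‖θ T‖ := lt_of_lt_of_le zero_lt_one hρ1
    have hρC : |C|/ε ≤ ‖θ T‖ := le_trans (le_max_right _ _) hρT
    have h3 : |C| ≤ ‖θ T‖ * ε := (div_le_iff₀ hε).1 hρC
    have hval : y i * ⟪‖θ T‖⁻¹ • θ T, x i⟫ = Z T i / ‖θ T‖ := by
      rw [real_inner_smul_left]
      simp only [hZdef]
      field_simp
    rw [hval, le_div_iff₀ hρpos]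
    have h4 : C ≤ |C| := le_abs_self C
    nlinarith
    -- Phase 4 : conclusion by compactness and uniqueness
  rw [Metric.tendsto_atTop]
  by_contra hcon
  push_neg at hcon
  obtain ⟨ε0, hε0, hfreq⟩ := hcon
  obtain ⟨K, hK⟩ := Filter.eventually_atTop.1 (hρinf.eventually_ge_atTop 1)
  have hfreq' : ∃ᶠ T in atTop, ε0 ≤ dist (‖θ T‖⁻¹ • θ T) u := by
    rw [Filter.frequently_atTop]
    intro N
    obtain ⟨T, hT1, hT2⟩ := hfreq N
    exact ⟨T, hT1, hT2⟩
  obtain ⟨ψ, hψmono, hψprop⟩ := Filter.extraction_of_frequently_atTop hfreq'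
  set b : ℕ → EuclideanSpace ℝ (Fin d) := fun k => ‖θ (ψ (k + K))‖⁻¹ • θ (ψ (k + K)) with hb
  have hbnorm : ∀ k, ‖b k‖ = 1 := by
    intro k
    have h1 : K ≤ ψ (k + K) := le_trans (Nat.le_add_left K k) hψmono.le_apply
    have h2 : (1:ℝ) ≤ ‖θ (ψ (k + K))‖ := hK _ h1
    rw [hb]
    rw [norm_smul, norm_inv, norm_norm, inv_mul_cancel₀ (by linarith)]
  have hbs : ∀ k, b k ∈ Metric.sphere (0 : EuclideanSpace ℝ (Fin d)) 1 := by
    intro k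
    rw [mem_sphere_zero_iff_norm]
    exact hbnorm k
  obtain ⟨l, hlmem, χ, hχmono, hχtend⟩ :=
    (isCompact_sphere (0 : EuclideanSpace ℝ (Fin d)) 1).tendsto_subseq hbs
  have hlnorm : ‖l‖ = 1 := mem_sphere_zero_iff_norm.1 hlmem
  have hldist : ε0 ≤ dist l u := by
    have hcont : Tendsto (fun k => dist (b (χ k)) u) atTop (nhds (dist l u)) :=
      hχtend.dist tendsto_const_nhds
    apply ge_of_tendsto hcont
    apply Filter.Eventually.of_forall
    intro k
    exact hψprop _
  have hlmarg : ∀ i, γ ≤ y i * ⟪l, x i⟫ := by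
    intro i
    have hcont : Tendsto (fun k => y i * ⟪b (χ k), x i⟫) atTop (nhds (y i * ⟪l, x i⟫)) := by
      apply Filter.Tendsto.const_mul
      exact hχtend.inner tendsto_const_nhds
    by_contra hlt
    push_neg at hlt
    set ε : ℝ := min ((γ - y i * ⟪l, x i⟫)/4) γ with hεdef
    have hε : 0 < ε := lt_min (by linarith) hγpos
    have hεγ : ε ≤ γ := min_le_right _ _
    obtain ⟨M, hM⟩ := Filter.eventually_atTop.1 (hKEY ε hε hεγ)
    have hike : ∀ᶠ k in atTop, γ - 2*ε ≤ y i * ⟪b (χ k), x i⟫ := by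
      filter_upwards [Filter.eventually_ge_atTop M] with k hk
      have h1 : M ≤ ψ (χ k + K) := by
        calc M ≤ k := hk
          _ ≤ χ k := hχmono.le_apply
          _ ≤ χ k + K := Nat.le_add_right _ _
          _ ≤ ψ (χ k + K) := hψmono.le_apply
      exact hM _ h1 i
    have hlim := ge_of_tendsto hcont hike
    have hε2 : ε ≤ (γ - y i * ⟪l, x i⟫)/4 := min_le_left _ _
    linarith
  have hlu : l = u := huniq l hlnorm hlmarg
  rw [hlu, dist_self] at hldist
  linarith
end

section
/- Let H ∈ ℝ^{n×n} be symmetric positive semi-definite with all eigenvalues in [λ_min, λ_max], where λ_min > 0, and let Q = diag(q₁,…,qₙ) with q* ≤ qᵢ ≤ 1 for all i, where q* > 0. Write √Q = diag(√q₁,…,√qₙ). Then for every 0 < η ≤ 1/λ_max, the symmetric matrix I − η√Q H √Q is positive semi-definite and its spectral (operator) norm satisfies ‖I − η√Q H √Q‖₂ ≤ 1 − η q* λ_min. -/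
open Matrix
open scoped MatrixOrder

lemma herm_qform_bounds {n : ℕ} {H : Matrix (Fin n) (Fin n) ℝ} (hH : H.IsHermitian)
    {a b : ℝ} (hab : ∀ i, hH.eigenvalues i ∈ Set.Icc a b) (x : Fin n → ℝ) :
    a * (x ⬝ᵥ x) ≤ x ⬝ᵥ H *ᵥ x ∧ x ⬝ᵥ H *ᵥ x ≤ b * (x ⬝ᵥ x) := by
  set U : Matrix (Fin n) (Fin n) ℝ := (hH.eigenvectorUnitary : Matrix (Fin n) (Fin n) ℝ) with hUdef
  have hU1 : U * star U = 1 := (Matrix.mem_unitaryGroup_iff).mp hH.eigenvectorUnitary.2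
  have hU : H = U * Matrix.diagonal hH.eigenvalues * star U := by
    have := hH.spectral_theorem
    simpa [Function.comp] using this
  have hscal : ∀ t : ℝ, U * (t • (1 : Matrix (Fin n) (Fin n) ℝ)) * star U
      = t • (1 : Matrix (Fin n) (Fin n) ℝ) := by
    intro t
    rw [mul_smul_comm, mul_one, smul_mul_assoc, hU1]
  have h1 : (H - a • 1).PosSemidef := by
    have key : H - a • 1 = U * Matrix.diagonal (fun i => hH.eigenvalues i - a) * star U := by
      rw [show (Matrix.diagonal (fun i => hH.eigenvalues i - a) : Matrix (Fin n) (Fin n) ℝ)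
          = Matrix.diagonal hH.eigenvalues - a • 1 by
        rw [Matrix.smul_one_eq_diagonal, ← Matrix.diagonal_sub]]
      rw [mul_sub, sub_mul, ← hU, hscal]
    rw [key]
    have := (Matrix.PosSemidef.diagonal (d := fun i => hH.eigenvalues i - a)
      (fun i => sub_nonneg.2 (hab i).1)).mul_mul_conjTranspose_same U
    simpa [Matrix.star_eq_conjTranspose] using this
  have h2 : (b • 1 - H).PosSemidef := by
    have key : b • 1 - H = U * Matrix.diagonal (fun i => b - hH.eigenvalues i) * star U := by
      rw [show (Matrix.diagonal (fun i => b - hH.eigenvalues i) : Matrix (Fin n) (Fin n) ℝ)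
          = b • 1 - Matrix.diagonal hH.eigenvalues by
        rw [Matrix.smul_one_eq_diagonal, ← Matrix.diagonal_sub]]
      rw [mul_sub, sub_mul, ← hU, hscal]
    rw [key]
    have := (Matrix.PosSemidef.diagonal (d := fun i => b - hH.eigenvalues i)
      (fun i => sub_nonneg.2 (hab i).2)).mul_mul_conjTranspose_same U
    simpa [Matrix.star_eq_conjTranspose] using this
  have e1 := h1.dotProduct_mulVec_nonneg x
  have e2 := h2.dotProduct_mulVec_nonneg x
  simp only [star_trivial, Matrix.sub_mulVec, dotProduct_sub, Matrix.smul_mulVec,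
    Matrix.one_mulVec, dotProduct_smul, smul_eq_mul, sub_nonneg] at e1 e2
  exact ⟨e1, e2⟩

/-- Let `H` be real symmetric positive semi-definite with all
eigenvalues in `[λ_min, λ_max]`, `λ_min > 0`, and `Q = diag(q₁,…,qₙ)` with
`q* ≤ qᵢ ≤ 1`, `q* > 0`. Then for `0 < η ≤ 1/λ_max`, the symmetric matrix
`I − η√Q H √Q` is positive semi-definite and its spectral norm is at most
`1 − η q* λ_min`. -/
theorem stmt_14 {n : ℕ} (hn : 0 < n)
    (H : Matrix (Fin n) (Fin n) ℝ) (hH : H.IsHermitian) (hPSD : H.PosSemidef)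
    (lammin lammax : ℝ) (hlammin : 0 < lammin)
    (heval : ∀ i, hH.eigenvalues i ∈ Set.Icc lammin lammax)
    (q : Fin n → ℝ) (qstar : ℝ) (hqstar : 0 < qstar)
    (hq : ∀ i, qstar ≤ q i ∧ q i ≤ 1)
    (η : ℝ) (hη₁ : 0 < η) (hη₂ : η ≤ 1 / lammax) :
    ((1 : Matrix (Fin n) (Fin n) ℝ)
        - η • (Matrix.diagonal (fun i => Real.sqrt (q i)) * H
            * Matrix.diagonal (fun i => Real.sqrt (q i)))).PosSemidef ∧
    ‖Matrix.toEuclideanCLM (𝕜 := ℝ)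
        ((1 : Matrix (Fin n) (Fin n) ℝ)
          - η • (Matrix.diagonal (fun i => Real.sqrt (q i)) * H
              * Matrix.diagonal (fun i => Real.sqrt (q i))))‖
      ≤ 1 - η * qstar * lammin := by
  -- basic scalars
  have i0 : Fin n := ⟨0, hn⟩
  have hq0 : ∀ i, (0:ℝ) ≤ q i := fun i => (hqstar.trans_le (hq i).1).le
  have hlmm : lammin ≤ lammax := (heval i0).1.trans (heval i0).2
  have hlmaxpos : 0 < lammax := hlammin.trans_le hlmm
  have hηlmax : η * lammax ≤ 1 := by
    rw [le_div_iff₀ hlmaxpos] at hη₂; linarith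
  have hqs1 : qstar ≤ 1 := (hq i0).1.trans (hq i0).2
  have hql : η * (qstar * lammin) ≤ η * lammax := by
    apply mul_le_mul_of_nonneg_left _ hη₁.le
    calc qstar * lammin ≤ 1 * lammax := by
          apply mul_le_mul hqs1 hlmm hlammin.le zero_le_one
      _ = lammax := one_mul _
  have hc0 : 0 ≤ 1 - η * qstar * lammin := by
    rw [mul_assoc]; linarith
  -- matrices
  set S : Matrix (Fin n) (Fin n) ℝ := Matrix.diagonal (fun i => Real.sqrt (q i)) with hSdef
  set M : Matrix (Fin n) (Fin n) ℝ := S * H * S with hMdef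
  have hSh : S.IsHermitian := Matrix.isHermitian_diagonal _
  have hMh : M.IsHermitian := by
    have := Matrix.isHermitian_conjTranspose_mul_mul S hH
    rwa [hSh.eq] at this
  -- quadratic form bounds on M
  have hMq : ∀ x : Fin n → ℝ,
      qstar * lammin * (x ⬝ᵥ x) ≤ x ⬝ᵥ M *ᵥ x ∧ x ⬝ᵥ M *ᵥ x ≤ lammax * (x ⬝ᵥ x) := by
    intro x
    set y : Fin n → ℝ := S *ᵥ x with hy
    have hxy : x ⬝ᵥ M *ᵥ x = y ⬝ᵥ H *ᵥ y := by
      rw [hMdef, ← Matrix.mulVec_mulVec, ← Matrix.mulVec_mulVec, Matrix.dotProduct_mulVec x S]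
      congr 1
      ext i
      simp [hSdef, hy, Matrix.vecMul_diagonal, Matrix.mulVec_diagonal, mul_comm]
    have hyy1 : qstar * (x ⬝ᵥ x) ≤ y ⬝ᵥ y := by
      rw [dotProduct, dotProduct, Finset.mul_sum]
      apply Finset.sum_le_sum
      intro i _
      have : y i * y i = q i * (x i * x i) := by
        simp only [hy, hSdef, Matrix.mulVec_diagonal]
        have := Real.mul_self_sqrt (hq0 i)
        ring_nf
        nlinarith [Real.sq_sqrt (hq0 i)]
      rw [this]
      exact mul_le_mul_of_nonneg_right (hq i).1 (mul_self_nonneg _)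
    have hyy2 : y ⬝ᵥ y ≤ x ⬝ᵥ x := by
      rw [dotProduct, dotProduct]
      apply Finset.sum_le_sum
      intro i _
      have : y i * y i = q i * (x i * x i) := by
        simp only [hy, hSdef, Matrix.mulVec_diagonal]
        nlinarith [Real.sq_sqrt (hq0 i)]
      rw [this]
      nlinarith [(hq i).2, mul_self_nonneg (x i)]
    have hb := herm_qform_bounds hH heval y
    constructor
    · rw [hxy]
      calc qstar * lammin * (x ⬝ᵥ x) = lammin * (qstar * (x ⬝ᵥ x)) := by ring
        _ ≤ lammin * (y ⬝ᵥ y) := mul_le_mul_of_nonneg_left hyy1 hlammin.le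
        _ ≤ y ⬝ᵥ H *ᵥ y := hb.1
    · rw [hxy]
      calc y ⬝ᵥ H *ᵥ y ≤ lammax * (y ⬝ᵥ y) := hb.2
        _ ≤ lammax * (x ⬝ᵥ x) := mul_le_mul_of_nonneg_left hyy2 hlmaxpos.le
  set c : ℝ := 1 - η * qstar * lammin with hcdef
  set T : Matrix (Fin n) (Fin n) ℝ := 1 - η • M with hTdef
  have hsm : ∀ (t : ℝ) (A : Matrix (Fin n) (Fin n) ℝ), A.IsHermitian → (t • A).IsHermitian := by
    intro t A hA
    show (t • A)ᴴ = t • A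
    rw [Matrix.conjTranspose_smul, star_trivial, hA.eq]
  have hTh : T.IsHermitian := by
    rw [hTdef]
    exact Matrix.isHermitian_one.sub (hsm η M hMh)
  have hTq : ∀ x : Fin n → ℝ, x ⬝ᵥ T *ᵥ x = x ⬝ᵥ x - η * (x ⬝ᵥ M *ᵥ x) := by
    intro x
    simp [hTdef, Matrix.sub_mulVec, dotProduct_sub, Matrix.smul_mulVec,
      Matrix.one_mulVec, dotProduct_smul, smul_eq_mul]
  have hxx0 : ∀ x : Fin n → ℝ, (0:ℝ) ≤ x ⬝ᵥ x := by
    intro x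
    rw [dotProduct]
    exact Finset.sum_nonneg fun i _ => mul_self_nonneg (x i)
  -- T is PSD
  have hTpsd : T.PosSemidef := by
    refine Matrix.PosSemidef.of_dotProduct_mulVec_nonneg hTh fun x => ?_
    rw [star_trivial, hTq x]
    have h2 := (hMq x).2
    have h0 : (0:ℝ) ≤ x ⬝ᵥ x := hxx0 x
    nlinarith
  set P : Matrix (Fin n) (Fin n) ℝ := η • M - (η * qstar * lammin) • 1 with hPdef
  have hPq : ∀ x : Fin n → ℝ,
      x ⬝ᵥ P *ᵥ x = η * (x ⬝ᵥ M *ᵥ x) - η * qstar * lammin * (x ⬝ᵥ x) := by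
    intro x
    simp [hPdef, Matrix.sub_mulVec, dotProduct_sub, Matrix.smul_mulVec,
      Matrix.one_mulVec, dotProduct_smul, smul_eq_mul]
  have hPh : P.IsHermitian := by
    rw [hPdef]
    exact (hsm η M hMh).sub (hsm _ _ Matrix.isHermitian_one)
  have hPpsd : P.PosSemidef := by
    refine Matrix.PosSemidef.of_dotProduct_mulVec_nonneg hPh fun x => ?_
    rw [star_trivial, hPq x]
    have h1 := (hMq x).1
    nlinarith
  have hDpsd : ((2 * c) • (1 : Matrix (Fin n) (Fin n) ℝ) - P).PosSemidef := by
    refine Matrix.PosSemidef.of_dotProduct_mulVec_nonneg ((hsm _ _ Matrix.isHermitian_one).sub hPh) fun x => ?_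
    rw [star_trivial]
    have : x ⬝ᵥ ((2 * c) • (1 : Matrix (Fin n) (Fin n) ℝ) - P) *ᵥ x
        = 2 * c * (x ⬝ᵥ x) - x ⬝ᵥ P *ᵥ x := by
      simp [Matrix.sub_mulVec, dotProduct_sub, Matrix.smul_mulVec,
        Matrix.one_mulVec, dotProduct_smul, smul_eq_mul]
    rw [this, hPq x]
    have h2 := (hMq x).2
    have h0 : (0:ℝ) ≤ x ⬝ᵥ x := hxx0 x
    have hqlm : η * qstar * lammin ≤ 1 := by rw [mul_assoc]; linarith
    rw [hcdef]
    nlinarith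
  -- T = c • 1 - P
  have hTP : T = c • (1 : Matrix (Fin n) (Fin n) ℝ) - P := by
    rw [hTdef, hPdef, hcdef]
    module
  -- key: c^2 • 1 - T * T is PSD
  set R : Matrix (Fin n) (Fin n) ℝ := CFC.sqrt P with hRdef
  have hRR : R * R = P := CFC.sqrt_mul_sqrt_self P hPpsd.nonneg
  have hRh : R.IsHermitian := (CFC.sqrt_nonneg P).posSemidef.1
  have e3 : R * P * R = P * P := by
    rw [← hRR]
    simp only [mul_assoc]
  have e2 : R * ((2 * c) • (1 : Matrix (Fin n) (Fin n) ℝ) - P) * R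
      = (2 * c) • P - P * P := by
    rw [mul_sub, sub_mul, e3]
    simp only [mul_smul_comm, smul_mul_assoc, mul_one, one_mul]
    rw [hRR]
  have e1 : T * T = (c * c) • (1 : Matrix (Fin n) (Fin n) ℝ) - (2 * c) • P + P * P := by
    rw [hTP]
    simp only [sub_mul, mul_sub, smul_mul_assoc, mul_smul_comm, one_mul, mul_one, smul_smul]
    module
  have hkey : (c^2) • (1 : Matrix (Fin n) (Fin n) ℝ) - T * T
      = R * ((2 * c) • (1 : Matrix (Fin n) (Fin n) ℝ) - P) * R := by
    rw [e2, e1, pow_two]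
    module
  have hkeypsd : ((c^2) • (1 : Matrix (Fin n) (Fin n) ℝ) - T * T).PosSemidef := by
    rw [hkey]
    have := hDpsd.mul_mul_conjTranspose_same R
    rwa [hRh.eq] at this
  -- norm bound pointwise
  have hnormsq : ∀ x : Fin n → ℝ, (T *ᵥ x) ⬝ᵥ (T *ᵥ x) ≤ c^2 * (x ⬝ᵥ x) := by
    intro x
    have h := hkeypsd.dotProduct_mulVec_nonneg x
    rw [star_trivial] at h
    have e : x ⬝ᵥ ((c^2) • (1 : Matrix (Fin n) (Fin n) ℝ) - T * T) *ᵥ x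
        = c^2 * (x ⬝ᵥ x) - x ⬝ᵥ (T * T) *ᵥ x := by
      simp [Matrix.sub_mulVec, dotProduct_sub, Matrix.smul_mulVec,
        Matrix.one_mulVec, dotProduct_smul, smul_eq_mul]
    rw [e] at h
    have e2 : x ⬝ᵥ (T * T) *ᵥ x = (T *ᵥ x) ⬝ᵥ (T *ᵥ x) := by
      rw [← Matrix.mulVec_mulVec, Matrix.dotProduct_mulVec x T]
      congr 1
      rw [← Matrix.mulVec_transpose]
      congr 1
    rw [e2] at h
    linarith
  constructor
  · exact hTpsd
  · refine ContinuousLinearMap.opNorm_le_bound _ hc0 fun x => ?_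
    set v : EuclideanSpace ℝ (Fin n) := Matrix.toEuclideanCLM (𝕜 := ℝ) T x with hv
    have hvx : WithLp.equiv _ _ v = T *ᵥ (WithLp.equiv _ _ x) := by
      rw [hv]; rfl
    have hnv : ‖v‖^2 = (T *ᵥ (WithLp.equiv _ _ x)) ⬝ᵥ (T *ᵥ (WithLp.equiv _ _ x)) := by
      rw [← real_inner_self_eq_norm_sq, EuclideanSpace.inner_eq_star_dotProduct, star_trivial]
      exact congrArg₂ (· ⬝ᵥ ·) hvx hvx
    have hnx : ‖x‖^2 = (WithLp.equiv _ _ x) ⬝ᵥ (WithLp.equiv _ _ x) := by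
      rw [← real_inner_self_eq_norm_sq, EuclideanSpace.inner_eq_star_dotProduct, star_trivial]
      rfl
    have hsq : ‖v‖^2 ≤ (c * ‖x‖)^2 := by
      rw [hnv, mul_pow, hnx]
      exact hnormsq _
    nlinarith [hsq, norm_nonneg v, norm_nonneg x, mul_nonneg hc0 (norm_nonneg x)]
end

section
/- Let v₁,…,vₙ ∈ ℝ^p be linearly independent, c₁,…,cₙ ∈ ℝ, y₁,…,yₙ ∈ ℝ, and θ⁰ ∈ ℝ^p. Consider the GRW iteration for the affine model whose prediction on sample i at parameter θ is cᵢ + ⟨θ − θ⁰, vᵢ⟩, trained with the squared loss: θ^{(0)} = θ⁰ and θ^{(t+1)} = θ^{(t)} − η Σᵢ qᵢ^{(t)} vᵢ (cᵢ + ⟨θ^{(t)} − θ⁰, vᵢ⟩ − yᵢ), with weights qᵢ^{(t)} ≥ 0 summing to 1 and satisfying Assumption 1. Then there exists η₀ > 0 such that for every 0 < η ≤ η₀, θ^{(t)} converges to the unique vector θ* with θ* − θ⁰ ∈ span{v₁,…,vₙ} and cᵢ + ⟨θ* − θ⁰, vᵢ⟩ = yᵢ for all i; in particular the limit does not depend on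 the weights qᵢ^{(t)}. -/
open scoped RealInnerProductSpace
open Filter

lemma aux_inner_all_zero {p n : ℕ} (v : Fin n → EuclideanSpace ℝ (Fin p))
    {w : EuclideanSpace ℝ (Fin p)} (hw : w ∈ Submodule.span ℝ (Set.range v))
    (h : ∀ i, ⟪w, v i⟫ = 0) : w = 0 := by
  have hle : Submodule.span ℝ (Set.range v) ≤ LinearMap.ker ((innerSL ℝ w).toLinearMap) := by
    rw [Submodule.span_le]
    rintro _ ⟨i, rfl⟩
    simpa using h i
  have := hle hw
  simp only [LinearMap.mem_ker, ContinuousLinearMap.coe_coe, innerSL_apply_apply] at this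
  exact inner_self_eq_zero.mp this

lemma aux_exists_interp {p n : ℕ} (v : Fin n → EuclideanSpace ℝ (Fin p))
    (hli : LinearIndependent ℝ v) (z : Fin n → ℝ) :
    ∃ w ∈ Submodule.span ℝ (Set.range v), ∀ i, ⟪w, v i⟫ = z i := by
  set S := Submodule.span ℝ (Set.range v)
  let L : S →ₗ[ℝ] (Fin n → ℝ) :=
    LinearMap.pi fun i => ((innerSL ℝ (v i)).toLinearMap).comp S.subtype
  have hinj : Function.Injective L := by
    rw [← LinearMap.ker_eq_bot, LinearMap.ker_eq_bot']
    intro m hm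
    have h0 : ∀ i, ⟪(m : EuclideanSpace ℝ (Fin p)), v i⟫ = 0 := by
      intro i
      have h1 := congrFun hm i
      simp only [L, LinearMap.pi_apply, LinearMap.coe_comp, Function.comp_apply,
        ContinuousLinearMap.coe_coe, innerSL_apply_apply, Submodule.coe_subtype,
        Pi.zero_apply] at h1
      rw [real_inner_comm]
      exact h1
    exact Subtype.ext (aux_inner_all_zero v m.2 h0)
  have hrank : Module.finrank ℝ S = Module.finrank ℝ (Fin n → ℝ) := by
    rw [finrank_span_eq_card hli]
    simp
  have hsurj : Function.Surjective L :=
    (LinearMap.injective_iff_surjective_of_finrank_eq_finrank hrank).mp hinj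
  obtain ⟨m, hm⟩ := hsurj z
  refine ⟨m, m.2, fun i => ?_⟩
  have h1 := congrFun hm i
  simp only [L, LinearMap.pi_apply, LinearMap.coe_comp, Function.comp_apply,
    ContinuousLinearMap.coe_coe, innerSL_apply_apply, Submodule.coe_subtype] at h1
  rw [real_inner_comm]
  exact h1

lemma aux_exists_mu {p n : ℕ} (hn : 0 < n) (v : Fin n → EuclideanSpace ℝ (Fin p))
    (hli : LinearIndependent ℝ v) :
    ∃ μ > (0:ℝ), ∀ e ∈ Submodule.span ℝ (Set.range v),
      μ * ‖e‖ ^ 2 ≤ ∑ i, ⟪e, v i⟫ ^ 2 := by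
  set S := Submodule.span ℝ (Set.range v)
  let F : S → ℝ := fun w => ∑ i, ⟪(w : EuclideanSpace ℝ (Fin p)), v i⟫ ^ 2
  have hFc : Continuous F := by
    apply continuous_finset_sum
    intro i _
    exact ((continuous_subtype_val.inner continuous_const)).pow 2
  have hv0 : v ⟨0, hn⟩ ≠ 0 := hli.ne_zero _
  have hsphne : (Metric.sphere (0 : S) 1).Nonempty := by
    refine ⟨⟨(‖v ⟨0, hn⟩‖⁻¹ : ℝ) • v ⟨0, hn⟩, S.smul_mem _ (Submodule.subset_span ⟨_, rfl⟩)⟩, ?_⟩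
    simp [norm_smul, norm_inv, inv_mul_cancel₀ (norm_ne_zero_iff.mpr hv0)]
  obtain ⟨w0, hw0s, hw0min⟩ :=
    (isCompact_sphere (0 : S) 1).exists_isMinOn hsphne hFc.continuousOn
  have hw0norm : ‖(w0 : EuclideanSpace ℝ (Fin p))‖ = 1 := by
    simpa using mem_sphere_zero_iff_norm.mp hw0s
  have hμpos : 0 < F w0 := by
    rcases lt_or_eq_of_le (Finset.sum_nonneg fun i _ => sq_nonneg _ : 0 ≤ F w0) with h | h
    · exact h
    · exfalso
      have hz : ∀ i, ⟪(w0 : EuclideanSpace ℝ (Fin p)), v i⟫ = 0 := by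
        intro i
        have := (Finset.sum_eq_zero_iff_of_nonneg (fun i _ => sq_nonneg _)).mp h.symm i
          (Finset.mem_univ i)
        exact pow_eq_zero_iff two_ne_zero |>.mp this
      have := aux_inner_all_zero v w0.2 hz
      rw [this] at hw0norm
      simp at hw0norm
  refine ⟨F w0, hμpos, fun e he => ?_⟩
  rcases eq_or_ne e 0 with rfl | hne
  · simp
  · have hnorm : ‖e‖ ≠ 0 := norm_ne_zero_iff.mpr hne
    set u : S := ⟨(‖e‖⁻¹ : ℝ) • e, S.smul_mem _ he⟩
    have hus : u ∈ Metric.sphere (0 : S) 1 := by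
      rw [mem_sphere_zero_iff_norm]
      show ‖(‖e‖⁻¹ : ℝ) • e‖ = 1
      simp [norm_smul, inv_mul_cancel₀ hnorm]
    have hmin := hw0min hus
    have hFu : F u = (‖e‖ ^ 2)⁻¹ * ∑ i, ⟪e, v i⟫ ^ 2 := by
      simp only [F, u, real_inner_smul_left, mul_pow, Finset.mul_sum]
      congr 1
      ext i
      rw [← inv_pow]
    have hmin' : F w0 ≤ (‖e‖ ^ 2)⁻¹ * ∑ i, ⟪e, v i⟫ ^ 2 := hFu ▸ hw0min hus
    have hsq : (0:ℝ) < ‖e‖ ^ 2 := by positivity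
    calc F w0 * ‖e‖ ^ 2 ≤ ((‖e‖ ^ 2)⁻¹ * ∑ i, ⟪e, v i⟫ ^ 2) * ‖e‖ ^ 2 := by
          exact mul_le_mul_of_nonneg_right hmin' hsq.le
      _ = ∑ i, ⟪e, v i⟫ ^ 2 := by field_simp


lemma aux_step {p n : ℕ} (v : Fin n → EuclideanSpace ℝ (Fin p)) (w : Fin n → ℝ)
    (hw0 : ∀ i, 0 ≤ w i) (hw1 : ∑ i, w i = 1) {η B : ℝ} (hη : 0 < η)
    (hB : ∑ i, ‖v i‖ ^ 2 ≤ B) (hηB : η * B ≤ 1) (e : EuclideanSpace ℝ (Fin p)) :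
    ‖e - η • ∑ i, (w i * ⟪e, v i⟫) • v i‖ ^ 2
      ≤ ‖e‖ ^ 2 - η * ∑ i, w i * ⟪e, v i⟫ ^ 2 := by
  set A : EuclideanSpace ℝ (Fin p) := ∑ i, (w i * ⟪e, v i⟫) • v i with hA
  set D : ℝ := ∑ i, w i * ⟪e, v i⟫ ^ 2 with hD
  have hD0 : 0 ≤ D := Finset.sum_nonneg fun i _ => mul_nonneg (hw0 i) (sq_nonneg _)
  have heA : ⟪e, A⟫ = D := by
    rw [hA, inner_sum]
    refine Finset.sum_congr rfl fun i _ => ?_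
    rw [real_inner_smul_right]
    ring
  have hwle1 : ∀ i, w i ≤ 1 := by
    intro i
    rw [← hw1]
    exact Finset.single_le_sum (fun j _ => hw0 j) (Finset.mem_univ i)
  have hB0 : 0 ≤ B := le_trans (Finset.sum_nonneg fun i _ => sq_nonneg _) hB
  have hAle : ‖A‖ ≤ ∑ i, w i * |⟪e, v i⟫| * ‖v i‖ := by
    refine (norm_sum_le _ _).trans_eq ?_
    refine Finset.sum_congr rfl fun i _ => ?_
    rw [norm_smul, Real.norm_eq_abs, abs_mul, abs_of_nonneg (hw0 i), mul_assoc]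
  have hA2 : ‖A‖ ^ 2 ≤ B * D := by
    have hcs : (∑ i, w i * |⟪e, v i⟫| * ‖v i‖) ^ 2
        ≤ (∑ i, w i * ‖v i‖ ^ 2) * ∑ i, w i * ⟪e, v i⟫ ^ 2 := by
      refine Finset.sum_sq_le_sum_mul_sum_of_sq_eq_mul _
        (fun i _ => mul_nonneg (hw0 i) (sq_nonneg _))
        (fun i _ => mul_nonneg (hw0 i) (sq_nonneg _)) (fun i _ => ?_)
      rw [mul_pow, mul_pow, sq_abs]
      ring
    have h1 : ∑ i, w i * ‖v i‖ ^ 2 ≤ B := by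
      refine le_trans (Finset.sum_le_sum fun i _ => ?_) hB
      nlinarith [sq_nonneg ‖v i‖, hw0 i, hwle1 i]
    calc ‖A‖ ^ 2 ≤ (∑ i, w i * |⟪e, v i⟫| * ‖v i‖) ^ 2 := by
          apply pow_le_pow_left₀ (norm_nonneg _) hAle
      _ ≤ (∑ i, w i * ‖v i‖ ^ 2) * D := hcs
      _ ≤ B * D := mul_le_mul_of_nonneg_right h1 hD0
  have hexp : ‖e - η • A‖ ^ 2 = ‖e‖ ^ 2 - 2 * η * D + η ^ 2 * ‖A‖ ^ 2 := by
    rw [norm_sub_sq_real, real_inner_smul_right, heA, norm_smul, mul_pow,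
      Real.norm_eq_abs, sq_abs]
    ring
  rw [hexp]
  nlinarith [hA2, hD0, mul_le_mul_of_nonneg_right hηB hD0, sq_nonneg η]

/-- GRW for an affine (linearized) model with predictions
`cᵢ + ⟨θ−θ⁰, vᵢ⟩`, squared loss, linearly independent features `vᵢ`, and weights
satisfying Assumption 1: there is `η₀ > 0` such that for every `0 < η ≤ η₀` the
iterates converge to the unique `θ*` with `θ*−θ⁰ ∈ span{v₁,…,vₙ}` and
`cᵢ + ⟨θ*−θ⁰, vᵢ⟩ = yᵢ` for all `i` — independently of the weights. -/
theorem stmt_17 {p n : ℕ} (hn : 0 < n)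
    (v : Fin n → EuclideanSpace ℝ (Fin p))
    (hli : LinearIndependent ℝ v)
    (c y : Fin n → ℝ)
    (θ0 : EuclideanSpace ℝ (Fin p))
    (q : ℕ → Fin n → ℝ)
    (hq0 : ∀ t i, 0 ≤ q t i)
    (hq1 : ∀ t, ∑ i, q t i = 1)
    (qlim : Fin n → ℝ)
    (hqlim : ∀ i, Tendsto (fun t => q t i) atTop (nhds (qlim i)))
    (hqpos : ∀ i, 0 < qlim i) :
    ∃ η₀ > (0 : ℝ), ∀ η : ℝ, 0 < η → η ≤ η₀ →
      ∀ θ : ℕ → EuclideanSpace ℝ (Fin p), θ 0 = θ0 →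
        (∀ t, θ (t + 1) = θ t
          - η • ∑ i, (q t i * (c i + ⟪θ t - θ0, v i⟫ - y i)) • v i) →
        ∃ θstar : EuclideanSpace ℝ (Fin p),
          (θstar - θ0 ∈ Submodule.span ℝ (Set.range v) ∧
            ∀ i, c i + ⟪θstar - θ0, v i⟫ = y i) ∧
          (∀ θ' : EuclideanSpace ℝ (Fin p),
            θ' - θ0 ∈ Submodule.span ℝ (Set.range v) →
            (∀ i, c i + ⟪θ' - θ0, v i⟫ = y i) → θ' = θstar) ∧
          Tendsto θ atTop (nhds θstar) := by
  classical
  set S := Submodule.span ℝ (Set.range v) with hS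
  obtain ⟨μ, hμpos, hμ⟩ := aux_exists_mu hn v hli
  set B : ℝ := ∑ i, ‖v i‖ ^ 2 with hBdef
  have hBpos : 0 < B := by
    have hv0 : v ⟨0, hn⟩ ≠ 0 := hli.ne_zero _
    have h0 : (0:ℝ) < ‖v ⟨0, hn⟩‖ ^ 2 := by
      have := norm_pos_iff.mpr hv0
      positivity
    exact Finset.sum_pos' (fun i _ => sq_nonneg _) ⟨⟨0, hn⟩, Finset.mem_univ _, h0⟩
  have hune : (Finset.univ : Finset (Fin n)).Nonempty := ⟨⟨0, hn⟩, Finset.mem_univ _⟩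
  set qs : ℝ := Finset.univ.inf' hune qlim with hqsdef
  have hqspos : 0 < qs := (Finset.lt_inf'_iff hune).mpr fun i _ => hqpos i
  have hqsle : ∀ i, qs ≤ qlim i := fun i => Finset.inf'_le _ (Finset.mem_univ i)
  refine ⟨min (1/B) (2/(qs*μ)), lt_min (by positivity) (by positivity), ?_⟩
  intro η hη hηle θ hθ0 hrec
  have hηB : η * B ≤ 1 := by
    have h1 : η ≤ 1/B := le_trans hηle (min_le_left _ _)
    rw [le_div_iff₀ hBpos] at h1
    linarith
  have hηqs : η * (qs * μ / 2) ≤ 1 := by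
    have h1 : η ≤ 2/(qs*μ) := le_trans hηle (min_le_right _ _)
    have h2 : 0 < qs * μ := mul_pos hqspos hμpos
    rw [le_div_iff₀ h2] at h1
    linarith
  obtain ⟨wst, hwstS, hwst⟩ := aux_exists_interp v hli (fun i => y i - c i)
  set θstar : EuclideanSpace ℝ (Fin p) := θ0 + wst with hθstar
  have hsub : θstar - θ0 = wst := by rw [hθstar]; abel
  refine ⟨θstar, ⟨by rw [hsub]; exact hwstS, fun i => by rw [hsub, hwst i]; ring⟩, ?_, ?_⟩
  · intro θ' hθ'S hθ'eq
    have hdS : θ' - θstar ∈ S := by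
      have hd : θ' - θstar = (θ' - θ0) - wst := by rw [hθstar]; abel
      rw [hd]
      exact Submodule.sub_mem _ hθ'S hwstS
    have hz : ∀ i, ⟪θ' - θstar, v i⟫ = 0 := by
      intro i
      have hd : θ' - θstar = (θ' - θ0) - wst := by rw [hθstar]; abel
      have h1 : ⟪θ' - θ0, v i⟫ = y i - c i := by linarith [hθ'eq i]
      rw [hd, inner_sub_left, h1, hwst i]
      ring
    exact sub_eq_zero.mp (aux_inner_all_zero v hdS hz)
  · -- convergence
    set e : ℕ → EuclideanSpace ℝ (Fin p) := fun t => θ t - θstar with he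
    have hres : ∀ t (i : Fin n), c i + ⟪θ t - θ0, v i⟫ - y i = ⟪e t, v i⟫ := by
      intro t i
      have hd : θ t - θ0 = e t + wst := by show θ t - θ0 = (θ t - θstar) + wst; rw [hθstar]; abel
      rw [hd, inner_add_left, hwst i]
      ring
    have herec : ∀ t, e (t+1) = e t - η • ∑ i, (q t i * ⟪e t, v i⟫) • v i := by
      intro t
      have hsum : ∑ i, (q t i * (c i + ⟪θ t - θ0, v i⟫ - y i)) • v i
          = ∑ i, (q t i * ⟪e t, v i⟫) • v i :=
        Finset.sum_congr rfl fun i _ => by rw [hres t i]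
      show θ (t+1) - θstar = _
      rw [hrec t, hsum, sub_right_comm]
    have heS : ∀ t, e t ∈ S := by
      intro t
      induction t with
      | zero =>
        have h0 : e 0 = -wst := by
          show θ 0 - θstar = -wst
          rw [hθ0, hθstar]; abel
        rw [h0]
        exact Submodule.neg_mem _ hwstS
      | succ t ih =>
        rw [herec t]
        exact Submodule.sub_mem _ ih (Submodule.smul_mem _ _ (Submodule.sum_mem _
          fun i _ => Submodule.smul_mem _ _ (Submodule.subset_span ⟨i, rfl⟩)))
    obtain ⟨T, hT⟩ : ∃ T : ℕ, ∀ t ≥ T, ∀ i, qlim i / 2 ≤ q t i := by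
      have : ∀ᶠ t in atTop, ∀ i, qlim i / 2 ≤ q t i :=
        eventually_all.mpr fun i =>
          (hqlim i).eventually (eventually_ge_nhds (by linarith [hqpos i]))
      exact eventually_atTop.mp this
    set ρ : ℝ := 1 - η * (qs * μ / 2) with hρdef
    have hρ0 : 0 ≤ ρ := by rw [hρdef]; linarith
    have hρ1 : ρ < 1 := by
      rw [hρdef]
      have : 0 < η * (qs * μ / 2) := by positivity
      linarith
    have hstep : ∀ t, T ≤ t → ‖e (t+1)‖ ^ 2 ≤ ρ * ‖e t‖ ^ 2 := by
      intro t ht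
      have h1 := aux_step v (q t) (hq0 t) (hq1 t) hη (le_refl B) hηB (e t)
      have hDlow : qs / 2 * (μ * ‖e t‖ ^ 2) ≤ ∑ i, q t i * ⟪e t, v i⟫ ^ 2 := by
        have h2 : ∑ i, qs / 2 * ⟪e t, v i⟫ ^ 2 ≤ ∑ i, q t i * ⟪e t, v i⟫ ^ 2 := by
          refine Finset.sum_le_sum fun i _ => ?_
          have := hT t ht i
          have := hqsle i
          nlinarith [sq_nonneg (⟪e t, v i⟫ : ℝ)]
        have h3 : qs / 2 * (μ * ‖e t‖ ^ 2) ≤ qs / 2 * ∑ i, ⟪e t, v i⟫ ^ 2 :=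
          mul_le_mul_of_nonneg_left (hμ (e t) (heS t)) (by positivity)
        rw [← Finset.mul_sum] at h2
        linarith
      rw [herec t]
      have h4 : η * (qs / 2 * (μ * ‖e t‖ ^ 2)) ≤ η * ∑ i, q t i * ⟪e t, v i⟫ ^ 2 :=
        mul_le_mul_of_nonneg_left hDlow hη.le
      calc ‖e t - η • ∑ i, (q t i * ⟪e t, v i⟫) • v i‖ ^ 2
          ≤ ‖e t‖ ^ 2 - η * ∑ i, q t i * ⟪e t, v i⟫ ^ 2 := h1
        _ ≤ ‖e t‖ ^ 2 - η * (qs / 2 * (μ * ‖e t‖ ^ 2)) := by linarith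
        _ = ρ * ‖e t‖ ^ 2 := by rw [hρdef]; ring
    have hgeo : ∀ k : ℕ, ‖e (T + k)‖ ^ 2 ≤ ρ ^ k * ‖e T‖ ^ 2 := by
      intro k
      induction k with
      | zero => simp
      | succ k ih =>
        have h1 := hstep (T + k) (Nat.le_add_right T k)
        calc ‖e (T + (k+1))‖ ^ 2 = ‖e (T + k + 1)‖ ^ 2 := by ring_nf
          _ ≤ ρ * ‖e (T + k)‖ ^ 2 := h1
          _ ≤ ρ * (ρ ^ k * ‖e T‖ ^ 2) := mul_le_mul_of_nonneg_left ih hρ0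
          _ = ρ ^ (k+1) * ‖e T‖ ^ 2 := by ring
    have hgtend : Tendsto (fun k : ℕ => ρ ^ k * ‖e T‖ ^ 2) atTop (nhds 0) := by
      have := (tendsto_pow_atTop_nhds_zero_of_lt_one hρ0 hρ1).mul_const (‖e T‖ ^ 2)
      simpa using this
    have hsqtend : Tendsto (fun k : ℕ => ‖e (T + k)‖ ^ 2) atTop (nhds 0) :=
      squeeze_zero (fun k => sq_nonneg _) (fun k => hgeo k) hgtend
    have hntend : Tendsto (fun k : ℕ => ‖e (T + k)‖) atTop (nhds 0) := by
      have h1 : Tendsto (fun k : ℕ => Real.sqrt (‖e (T + k)‖ ^ 2)) atTop (nhds (Real.sqrt 0)) :=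
        (Real.continuous_sqrt.tendsto 0).comp hsqtend
      simpa [Real.sqrt_sq (norm_nonneg _)] using h1
    have hetend : Tendsto (fun t : ℕ => ‖e t‖) atTop (nhds 0) := by
      have heq : (fun k : ℕ => ‖e (T + k)‖) = fun k : ℕ => ‖e (k + T)‖ :=
        funext fun k => by rw [Nat.add_comm]
      rw [heq] at hntend
      exact (tendsto_add_atTop_iff_nat T).mp hntend
    rw [tendsto_iff_norm_sub_tendsto_zero]
    exact hetend
end

section
/- Let q₁,…,qₙ ≥ 0 with Σᵢ qᵢ = 1 and q* := minᵢ qᵢ > 0, suppose x₁,…,xₙ are linearly independent, and let 0 < ε ≤ min{ q*/3, (q* λ_min)² / (12 λ_max²), 1/3 }. If q'₁,…,q'ₙ ≥ 0 satisfy Σᵢ q'ᵢ = 1 and |q'ᵢ − qᵢ| < ε for every i, then for every η > 0 and every θ ∈ ℝ^d, the updated point θ' = θ − η Σᵢ q'ᵢ xᵢ (⟨θ,xᵢ⟩ − yᵢ) satisfies F(θ') ≤ (1 − η q* λ_min + 2A² η²) F(θ). -/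
set_option maxHeartbeats 1000000

open scoped RealInnerProductSpace

theorem bilin_eig {n : ℕ} (G : Matrix (Fin n) (Fin n) ℝ) (hG : G.IsHermitian)
    (u w : EuclideanSpace ℝ (Fin n)) :
    ⟪u, Matrix.toEuclideanLin G w⟫
      = ∑ k, hG.eigenvalues k * (⟪hG.eigenvectorBasis k, u⟫ * ⟪hG.eigenvectorBasis k, w⟫) := by
  have hT : ∀ k, Matrix.toEuclideanLin G (hG.eigenvectorBasis k)
      = hG.eigenvalues k • (hG.eigenvectorBasis k : EuclideanSpace ℝ (Fin n)) := by
    intro k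
    have := hG.mulVec_eigenvectorBasis k
    rw [Matrix.toEuclideanLin_apply]
    exact congrArg (WithLp.equiv 2 (Fin n → ℝ)).symm this
  conv_lhs => rw [← hG.eigenvectorBasis.sum_repr' w, map_sum]
  simp only [map_smul, hT]
  rw [inner_sum]
  refine Finset.sum_congr rfl fun k _ => ?_
  rw [smul_smul, real_inner_smul_right, real_inner_comm u]
  ring

theorem bilin_sum {n : ℕ} (G : Matrix (Fin n) (Fin n) ℝ)
    (u w : EuclideanSpace ℝ (Fin n)) :
    ⟪u, Matrix.toEuclideanLin G w⟫ = ∑ i, ∑ j, u i * (G i j * w j) := by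
  rw [Matrix.toEuclideanLin_apply]
  simp [PiLp.inner_apply, Matrix.mulVec, dotProduct, Finset.mul_sum, Finset.sum_mul]
  exact Finset.sum_congr rfl fun i _ => Finset.sum_congr rfl fun j _ => by ring

theorem parseval {n : ℕ} (G : Matrix (Fin n) (Fin n) ℝ) (hG : G.IsHermitian)
    (u : EuclideanSpace ℝ (Fin n)) :
    ∑ k, ⟪hG.eigenvectorBasis k, u⟫ ^ 2 = ∑ i, u i ^ 2 := by
  have h1 := hG.eigenvectorBasis.sum_inner_mul_inner u u
  have h2 : (⟪u, u⟫ : ℝ) = ∑ i, u i ^ 2 := by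
    simp only [PiLp.inner_apply, RCLike.inner_apply, conj_trivial]
    exact Finset.sum_congr rfl fun i _ => by ring
  rw [← h2, ← h1]
  refine Finset.sum_congr rfl fun k _ => ?_
  rw [real_inner_comm u, sq]

theorem quad_lower {n : ℕ} (G : Matrix (Fin n) (Fin n) ℝ) (hG : G.IsHermitian)
    (lammin : ℝ) (hlammin : lammin = ⨅ i, hG.eigenvalues i)
    (u : Fin n → ℝ) :
    lammin * ∑ i, u i ^ 2 ≤ ∑ i, ∑ j, u i * (G i j * u j) := by
  set u' : EuclideanSpace ℝ (Fin n) := (WithLp.equiv 2 (Fin n → ℝ)).symm u with hu'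
  have h1 : (∑ i, ∑ j, u i * (G i j * u j)) = ⟪u', Matrix.toEuclideanLin G u'⟫ :=
    (bilin_sum G u' u').symm
  have h2 : (∑ i, u i ^ 2) = ∑ k, ⟪hG.eigenvectorBasis k, u'⟫ ^ 2 :=
    (parseval G hG u').symm
  rw [h1, h2, bilin_eig G hG, Finset.mul_sum]
  refine Finset.sum_le_sum fun k _ => ?_
  have hk : lammin ≤ hG.eigenvalues k := hlammin ▸ ciInf_le (Set.finite_range _).bddBelow k
  nlinarith [sq_nonneg (⟪hG.eigenvectorBasis k, u'⟫ : ℝ)]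

theorem bilin_upper {n : ℕ} (hn : 0 < n) (G : Matrix (Fin n) (Fin n) ℝ) (hG : G.IsHermitian)
    (lammin lammax : ℝ) (hlammin : lammin = ⨅ i, hG.eigenvalues i)
    (hlammax : lammax = ⨆ i, hG.eigenvalues i) (hpos : 0 < lammin)
    (u w : Fin n → ℝ) :
    (∑ i, ∑ j, u i * (G i j * w j)) ^ 2
      ≤ lammax ^ 2 * ((∑ i, u i ^ 2) * (∑ j, w j ^ 2)) := by
  set u' : EuclideanSpace ℝ (Fin n) := (WithLp.equiv 2 (Fin n → ℝ)).symm u with hu'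
  set w' : EuclideanSpace ℝ (Fin n) := (WithLp.equiv 2 (Fin n → ℝ)).symm w with hw'
  have h1 : (∑ i, ∑ j, u i * (G i j * w j)) = ⟪u', Matrix.toEuclideanLin G w'⟫ :=
    (bilin_sum G u' w').symm
  have h2 : (∑ i, u i ^ 2) = ∑ k, ⟪hG.eigenvectorBasis k, u'⟫ ^ 2 := (parseval G hG u').symm
  have h3 : (∑ j, w j ^ 2) = ∑ k, ⟪hG.eigenvectorBasis k, w'⟫ ^ 2 := (parseval G hG w').symm
  rw [h1, h2, h3, bilin_eig G hG]
  set c : Fin n → ℝ := fun k => ⟪hG.eigenvectorBasis k, u'⟫ with hc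
  set d : Fin n → ℝ := fun k => ⟪hG.eigenvectorBasis k, w'⟫ with hd
  have hev : ∀ k, 0 < hG.eigenvalues k := fun k =>
    lt_of_lt_of_le hpos (hlammin ▸ ciInf_le (Set.finite_range _).bddBelow k)
  have hevmax : ∀ k, hG.eigenvalues k ≤ lammax := fun k =>
    hlammax ▸ le_ciSup (Set.finite_range _).bddAbove k
  have hmax0 : 0 ≤ lammax := le_trans (hev ⟨0, hn⟩).le (hevmax ⟨0, hn⟩)
  have h0 : 0 ≤ ∑ k, |c k| * |d k| :=
    Finset.sum_nonneg fun k _ => mul_nonneg (abs_nonneg _) (abs_nonneg _)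
  have habs : |∑ k, hG.eigenvalues k * (c k * d k)| ≤ lammax * ∑ k, |c k| * |d k| := by
    calc |∑ k, hG.eigenvalues k * (c k * d k)|
        ≤ ∑ k, |hG.eigenvalues k * (c k * d k)| := Finset.abs_sum_le_sum_abs _ _
      _ ≤ ∑ k, lammax * (|c k| * |d k|) := by
          refine Finset.sum_le_sum fun k _ => ?_
          rw [abs_mul, abs_mul, abs_of_pos (hev k)]
          exact mul_le_mul_of_nonneg_right (hevmax k)
            (mul_nonneg (abs_nonneg _) (abs_nonneg _))
      _ = lammax * ∑ k, |c k| * |d k| := by rw [Finset.mul_sum]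
  have hcs : (∑ k, |c k| * |d k|) ^ 2 ≤ (∑ k, c k ^ 2) * (∑ k, d k ^ 2) := by
    have := Finset.sum_mul_sq_le_sq_mul_sq Finset.univ (fun k => |c k|) (fun k => |d k|)
    simpa [sq_abs] using this
  calc (∑ k, hG.eigenvalues k * (c k * d k)) ^ 2
      = |∑ k, hG.eigenvalues k * (c k * d k)| ^ 2 := (sq_abs _).symm
    _ ≤ (lammax * ∑ k, |c k| * |d k|) ^ 2 := by
        exact pow_le_pow_left₀ (abs_nonneg _) habs 2
    _ = lammax ^ 2 * (∑ k, |c k| * |d k|) ^ 2 := by ring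
    _ ≤ lammax ^ 2 * ((∑ k, c k ^ 2) * (∑ k, d k ^ 2)) :=
        mul_le_mul_of_nonneg_left hcs (sq_nonneg _)

theorem stmt_aux {d n : ℕ} (hn : 0 < n)
    (x : Fin n → EuclideanSpace ℝ (Fin d))
    (q : Fin n → ℝ) (hq0 : ∀ i, 0 ≤ q i) (hq1 : ∑ i, q i = 1)
    (qstar : ℝ) (hqstar : qstar = ⨅ i, q i) (hqpos : 0 < qstar)
    (hG : (Matrix.of fun i j => ⟪x i, x j⟫ : Matrix (Fin n) (Fin n) ℝ).IsHermitian)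
    (lammin lammax : ℝ)
    (hlammin : lammin = ⨅ i, hG.eigenvalues i)
    (hlammax : lammax = ⨆ i, hG.eigenvalues i)
    (hlamminpos : 0 < lammin)
    (A : ℝ) (hA : A = ∑ i, ‖x i‖ ^ 2)
    (ε : ℝ) (hε0 : 0 < ε)
    (hε : ε ≤ min (qstar / 3) (min ((qstar * lammin) ^ 2 / (12 * lammax ^ 2)) (1 / 3)))
    (q' : Fin n → ℝ) (hq'0 : ∀ i, 0 ≤ q' i) (hq'1 : ∑ i, q' i = 1)
    (hq'near : ∀ i, |q' i - q i| < ε)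
    (η : ℝ) (hη : 0 < η) (r : Fin n → ℝ) :
    ∑ i, q i * (r i - η * ∑ j, q' j * r j * ⟪x j, x i⟫) ^ 2
      ≤ (1 - η * qstar * lammin + 2 * A ^ 2 * η ^ 2) * ∑ i, q i * r i ^ 2 := by
  set G : Matrix (Fin n) (Fin n) ℝ := Matrix.of fun i j => ⟪x i, x j⟫ with hGdef
  have hGa : ∀ i j, G i j = ⟪x i, x j⟫ := fun i j => rfl
  -- basic facts
  have hqleq : ∀ i, qstar ≤ q i := fun i => hqstar ▸ ciInf_le (Set.finite_range q).bddBelow i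
  have hqle1 : ∀ i, q i ≤ 1 := by
    intro i
    rw [← hq1]
    exact Finset.single_le_sum (fun j _ => hq0 j) (Finset.mem_univ i)
  have hε1 : ε ≤ qstar / 3 := le_trans hε (min_le_left _ _)
  have hε2 : ε ≤ (qstar * lammin) ^ 2 / (12 * lammax ^ 2) :=
    le_trans hε (le_trans (min_le_right _ _) (min_le_left _ _))
  have hlmax : lammin ≤ lammax := by
    have h1 : lammin ≤ hG.eigenvalues ⟨0, hn⟩ :=
      hlammin ▸ ciInf_le (Set.finite_range _).bddBelow _
    have h2 : hG.eigenvalues ⟨0, hn⟩ ≤ lammax :=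
      hlammax ▸ le_ciSup (Set.finite_range _).bddAbove _
    linarith
  have hlmaxpos : 0 < lammax := lt_of_lt_of_le hlamminpos hlmax
  -- notation
  set F : ℝ := ∑ i, q i * r i ^ 2 with hF
  have hF0 : 0 ≤ F := Finset.sum_nonneg fun i _ => mul_nonneg (hq0 i) (sq_nonneg _)
  set u : Fin n → ℝ := fun i => q i * r i with hu
  set w : Fin n → ℝ := fun i => q' i * r i with hw
  set δ : Fin n → ℝ := fun i => (q' i - q i) * r i with hδdef
  set s : Fin n → ℝ := fun i => ∑ j, q' j * r j * ⟪x j, x i⟫ with hs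
  clear_value F u w δ s
  -- sum bounds
  have hu_lo : qstar * F ≤ ∑ i, u i ^ 2 := by
    rw [hF, Finset.mul_sum]
    refine Finset.sum_le_sum fun i _ => ?_
    have h := mul_nonneg (mul_nonneg (sub_nonneg.2 (hqleq i)) (hq0 i)) (sq_nonneg (r i))
    simp only [hu]
    nlinarith [h]
  have hu_hi : ∑ i, u i ^ 2 ≤ F := by
    rw [hF]
    refine Finset.sum_le_sum fun i _ => ?_
    simp only [hu]
    nlinarith [mul_nonneg (mul_nonneg (hq0 i) (sub_nonneg.2 (hqle1 i))) (sq_nonneg (r i))]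
  have hr_hi : qstar * ∑ i, r i ^ 2 ≤ F := by
    rw [hF, Finset.mul_sum]
    exact Finset.sum_le_sum fun i _ => mul_le_mul_of_nonneg_right (hqleq i) (sq_nonneg _)
  have hr0 : 0 ≤ ∑ i, r i ^ 2 := Finset.sum_nonneg fun i _ => sq_nonneg _
  have hδ_hi : ∑ i, δ i ^ 2 ≤ ε ^ 2 * ∑ i, r i ^ 2 := by
    rw [Finset.mul_sum]
    refine Finset.sum_le_sum fun i _ => ?_
    have h1 : (q' i - q i) ^ 2 ≤ ε ^ 2 := by
      have := hq'near i
      nlinarith [abs_nonneg (q' i - q i), sq_abs (q' i - q i)]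
    simp only [hδdef]
    nlinarith [sq_nonneg (r i)]
  -- cross term lower bound
  have hBuu := quad_lower G hG lammin hlammin u
  have hBud2 := bilin_upper hn G hG lammin lammax hlammin hlammax hlamminpos u δ
  set Bud : ℝ := ∑ i, ∑ j, u i * (G i j * δ j) with hBudeq
  set Buu : ℝ := ∑ i, ∑ j, u i * (G i j * u j) with hBuueq
  set Su : ℝ := ∑ i, u i ^ 2 with hSu
  set Sd : ℝ := ∑ i, δ i ^ 2 with hSd
  set Sr : ℝ := ∑ i, r i ^ 2 with hSr
  clear_value Bud Buu Su Sd Sr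
  have hSd0 : 0 ≤ Sd := by rw [hSd]; exact Finset.sum_nonneg fun i _ => sq_nonneg _
  have hBudb : Bud ^ 2 ≤ (qstar * lammin * F / 6) ^ 2 := by
    have h1 : Bud ^ 2 ≤ lammax ^ 2 * (F * (ε ^ 2 * Sr)) := by
      refine le_trans hBud2 ?_
      have h12 : Su * Sd ≤ F * (ε ^ 2 * Sr) := mul_le_mul hu_hi hδ_hi hSd0 hF0
      nlinarith [sq_nonneg lammax]
    have h3 : lammax ^ 2 * ε ^ 2 ≤ qstar ^ 3 * lammin ^ 2 / 36 := by
      have hεε : ε * ε ≤ (qstar / 3) * ((qstar * lammin) ^ 2 / (12 * lammax ^ 2)) :=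
        mul_le_mul hε1 hε2 hε0.le (by positivity)
      have heq : lammax ^ 2 * ((qstar / 3) * ((qstar * lammin) ^ 2 / (12 * lammax ^ 2)))
          = qstar ^ 3 * lammin ^ 2 / 36 := by
        field_simp
        ring
      nlinarith [mul_le_mul_of_nonneg_left hεε (sq_nonneg lammax)]
    have h4 : qstar * Bud ^ 2 ≤ qstar ^ 3 * lammin ^ 2 / 36 * F ^ 2 := by
      have h41 : qstar * Bud ^ 2 ≤ qstar * (lammax ^ 2 * (F * (ε ^ 2 * Sr))) :=
        mul_le_mul_of_nonneg_left h1 hqpos.le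
      have h42 : lammax ^ 2 * ε ^ 2 * (F * (qstar * Sr)) ≤ lammax ^ 2 * ε ^ 2 * (F * F) := by
        have := mul_le_mul_of_nonneg_left hr_hi
          (mul_nonneg (mul_nonneg (sq_nonneg lammax) (sq_nonneg ε)) hF0)
        nlinarith [this]
      have h43 : lammax ^ 2 * ε ^ 2 * (F * F) ≤ qstar ^ 3 * lammin ^ 2 / 36 * F ^ 2 := by
        nlinarith [mul_le_mul_of_nonneg_right h3 (sq_nonneg F)]
      nlinarith [h41, h42, h43]
    nlinarith [h4, hqpos, sq_nonneg Bud]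
  have hBudlb : -(qstar * lammin / 2 * F) ≤ Bud := by
    have hK : (0:ℝ) ≤ qstar * lammin * F / 6 := by positivity
    have := (abs_le_of_sq_le_sq' hBudb hK).1
    nlinarith [hqpos, hlamminpos, hF0]
  have hC : qstar * lammin / 2 * F ≤ ∑ i, q i * (r i * s i) := by
    have hCs : (∑ i, q i * (r i * s i)) = Buu + Bud := by
      rw [hBuueq, hBudeq, ← Finset.sum_add_distrib]
      refine Finset.sum_congr rfl fun i _ => ?_
      simp only [hs, Finset.mul_sum]
      rw [← Finset.sum_add_distrib]
      refine Finset.sum_congr rfl fun j _ => ?_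
      have hsym : (⟪x j, x i⟫ : ℝ) = G i j := by rw [hGa]; exact real_inner_comm _ _
      rw [hsym]
      simp only [hu, hδdef]
      ring
    have hq2 : lammin * (qstar * F) ≤ lammin * Su :=
      mul_le_mul_of_nonneg_left hu_lo hlamminpos.le
    have hBuu' : lammin * (qstar * F) ≤ Buu := hq2.trans hBuu
    rw [hCs]
    linarith only [hBuu', hBudlb]
  -- quadratic term upper bound
  set v : EuclideanSpace ℝ (Fin d) := ∑ j, (q' j * r j) • x j with hv
  clear_value v
  have hsv : ∀ i, s i = ⟪v, x i⟫ := by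
    intro i
    rw [hs, hv, sum_inner]
    exact Finset.sum_congr rfl fun j _ => by rw [real_inner_smul_left]
  have hA0 : 0 ≤ A := by
    rw [hA]; positivity
  have hq'43 : ∀ j, q' j ≤ 4 / 3 * q j := by
    intro j
    have h1 := (abs_lt.mp (hq'near j)).2
    have h2 := hqleq j
    linarith [hε1]
  set S : ℝ := ∑ j, q j * (|r j| * ‖x j‖) with hSdef
  have hS0 : 0 ≤ S := by
    rw [hSdef]
    exact Finset.sum_nonneg fun j _ =>
      mul_nonneg (hq0 j) (mul_nonneg (abs_nonneg _) (norm_nonneg _))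
  have hvnorm : ‖v‖ ≤ 4 / 3 * S := by
    rw [hv, hSdef, Finset.mul_sum]
    refine le_trans (norm_sum_le _ _) (Finset.sum_le_sum fun j _ => ?_)
    rw [norm_smul, Real.norm_eq_abs, abs_mul, abs_of_nonneg (hq'0 j)]
    have h := mul_le_mul_of_nonneg_right (hq'43 j)
      (mul_nonneg (abs_nonneg (r j)) (norm_nonneg (x j)))
    linarith only [h]
  have hqx_le : ∑ j, q j * ‖x j‖ ^ 2 ≤ A := by
    rw [hA]
    exact Finset.sum_le_sum fun j _ => mul_le_of_le_one_left (sq_nonneg _) (hqle1 j)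
  have hS2 : S ^ 2 ≤ F * ∑ j, q j * ‖x j‖ ^ 2 := by
    have hcs := Finset.sum_mul_sq_le_sq_mul_sq Finset.univ
      (fun j => Real.sqrt (q j) * |r j|) (fun j => Real.sqrt (q j) * ‖x j‖)
    have he1 : ∀ j, (Real.sqrt (q j) * |r j|) * (Real.sqrt (q j) * ‖x j‖)
        = q j * (|r j| * ‖x j‖) := by
      intro j
      calc (Real.sqrt (q j) * |r j|) * (Real.sqrt (q j) * ‖x j‖)
          = Real.sqrt (q j) * Real.sqrt (q j) * (|r j| * ‖x j‖) := by ring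
        _ = q j * (|r j| * ‖x j‖) := by rw [Real.mul_self_sqrt (hq0 j)]
    have he2 : ∀ j, (Real.sqrt (q j) * |r j|) ^ 2 = q j * r j ^ 2 := by
      intro j
      rw [mul_pow, Real.sq_sqrt (hq0 j), sq_abs]
    have he3 : ∀ j, (Real.sqrt (q j) * ‖x j‖) ^ 2 = q j * ‖x j‖ ^ 2 := by
      intro j
      rw [mul_pow, Real.sq_sqrt (hq0 j)]
    simp only [he1, he2, he3] at hcs
    rw [hSdef, hF]
    exact hcs
  have hv2 : ‖v‖ ^ 2 ≤ 16 / 9 * (F * A) := by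
    have h1 : ‖v‖ ^ 2 ≤ (4 / 3 * S) ^ 2 := pow_le_pow_left₀ (norm_nonneg v) hvnorm 2
    have h2 : S ^ 2 ≤ F * A := hS2.trans (mul_le_mul_of_nonneg_left hqx_le hF0)
    linarith only [h1, h2]
  have hD : ∑ i, q i * s i ^ 2 ≤ 2 * A ^ 2 * F := by
    have hterm : ∀ i, q i * s i ^ 2 ≤ q i * (‖v‖ ^ 2 * ‖x i‖ ^ 2) := by
      intro i
      refine mul_le_mul_of_nonneg_left ?_ (hq0 i)
      rw [hsv i]
      have h := real_inner_mul_inner_self_le v (x i)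
      rw [real_inner_self_eq_norm_sq, real_inner_self_eq_norm_sq] at h
      linarith only [h]
    calc ∑ i, q i * s i ^ 2
        ≤ ∑ i, q i * (‖v‖ ^ 2 * ‖x i‖ ^ 2) := Finset.sum_le_sum fun i _ => hterm i
      _ = ‖v‖ ^ 2 * ∑ i, q i * ‖x i‖ ^ 2 := by
          rw [Finset.mul_sum]
          exact Finset.sum_congr rfl fun i _ => by ring
      _ ≤ 16 / 9 * (F * A) * A :=
          mul_le_mul hv2 hqx_le
            (Finset.sum_nonneg fun i _ => mul_nonneg (hq0 i) (sq_nonneg _))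
            (by positivity)
      _ ≤ 2 * A ^ 2 * F := by
          linarith only [mul_nonneg hF0 (mul_nonneg hA0 hA0)]
  -- final assembly
  have hgoal1 : (∑ i, q i * (r i - η * ∑ j, q' j * r j * ⟪x j, x i⟫) ^ 2)
      = ∑ i, q i * (r i - η * s i) ^ 2 :=
    Finset.sum_congr rfl fun i _ => by simp only [hs]
  have hexp : (∑ i, q i * (r i - η * s i) ^ 2)
      = F - 2 * η * ∑ i, q i * (r i * s i) + η ^ 2 * ∑ i, q i * s i ^ 2 := by
    rw [hF, Finset.mul_sum, Finset.mul_sum, ← Finset.sum_sub_distrib,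
      ← Finset.sum_add_distrib]
    exact Finset.sum_congr rfl fun i _ => by ring
  rw [hgoal1, hexp]
  have p1 : 2 * η * (qstar * lammin / 2 * F) ≤ 2 * η * ∑ i, q i * (r i * s i) :=
    mul_le_mul_of_nonneg_left hC (by positivity)
  have p2 : η ^ 2 * ∑ i, q i * s i ^ 2 ≤ η ^ 2 * (2 * A ^ 2 * F) :=
    mul_le_mul_of_nonneg_left hD (sq_nonneg η)
  linarith only [p1, p2]

/-- Descent inequality for dynamic GRW with perturbed weights.
If `|q'ᵢ − qᵢ| < ε` with `ε ≤ min{q*/3, (q*λ_min)²/(12λ_max²), 1/3}`, then one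
gradient step with weights `q'` satisfies
`F(θ') ≤ (1 − η q* λ_min + 2A²η²) F(θ)`, where `F(θ) = Σᵢ qᵢ(⟨θ,xᵢ⟩−yᵢ)²` and
`A = Σᵢ‖xᵢ‖²`. -/
theorem stmt_18 {d n : ℕ} (hn : 0 < n)
    (x : Fin n → EuclideanSpace ℝ (Fin d)) (y : Fin n → ℝ)
    (hli : LinearIndependent ℝ x)
    (q : Fin n → ℝ) (hq0 : ∀ i, 0 ≤ q i) (hq1 : ∑ i, q i = 1)
    (qstar : ℝ) (hqstar : qstar = ⨅ i, q i) (hqpos : 0 < qstar)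
    (hG : (Matrix.of fun i j => ⟪x i, x j⟫ : Matrix (Fin n) (Fin n) ℝ).IsHermitian)
    (lammin lammax : ℝ)
    (hlammin : lammin = ⨅ i, hG.eigenvalues i)
    (hlammax : lammax = ⨆ i, hG.eigenvalues i)
    (hlamminpos : 0 < lammin)
    (A : ℝ) (hA : A = ∑ i, ‖x i‖ ^ 2)
    (ε : ℝ) (hε0 : 0 < ε)
    (hε : ε ≤ min (qstar / 3) (min ((qstar * lammin) ^ 2 / (12 * lammax ^ 2)) (1 / 3)))
    (q' : Fin n → ℝ) (hq'0 : ∀ i, 0 ≤ q' i) (hq'1 : ∑ i, q' i = 1)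
    (hq'near : ∀ i, |q' i - q i| < ε) :
    ∀ η : ℝ, 0 < η → ∀ θ : EuclideanSpace ℝ (Fin d),
      (∑ i, q i * (⟪θ - η • ∑ j, (q' j * (⟪θ, x j⟫ - y j)) • x j, x i⟫ - y i) ^ 2)
        ≤ (1 - η * qstar * lammin + 2 * A ^ 2 * η ^ 2)
            * ∑ i, q i * (⟪θ, x i⟫ - y i) ^ 2 := by
  intro η hη θ
  have key := stmt_aux hn x q hq0 hq1 qstar hqstar hqpos hG lammin lammax hlammin hlammax
    hlamminpos A hA ε hε0 hε q' hq'0 hq'1 hq'near η hη (fun i => ⟪θ, x i⟫ - y i)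
  have heq : ∀ i, (⟪θ - η • ∑ j, (q' j * (⟪θ, x j⟫ - y j)) • x j, x i⟫ : ℝ) - y i
      = (⟪θ, x i⟫ - y i) - η * ∑ j, q' j * (⟪θ, x j⟫ - y j) * ⟪x j, x i⟫ := by
    intro i
    rw [inner_sub_left, real_inner_smul_left, sum_inner]
    have h : ∀ j ∈ Finset.univ, (⟪(q' j * (⟪θ, x j⟫ - y j)) • x j, x i⟫ : ℝ)
        = q' j * (⟪θ, x j⟫ - y j) * ⟪x j, x i⟫ := fun j _ => real_inner_smul_left _ _ _
    rw [Finset.sum_congr rfl h]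
    ring
  calc (∑ i, q i * (⟪θ - η • ∑ j, (q' j * (⟪θ, x j⟫ - y j)) • x j, x i⟫ - y i) ^ 2)
      = ∑ i, q i * ((⟪θ, x i⟫ - y i)
          - η * ∑ j, q' j * (⟪θ, x j⟫ - y j) * ⟪x j, x i⟫) ^ 2 :=
        Finset.sum_congr rfl fun i _ => by rw [heq i]
    _ ≤ (1 - η * qstar * lammin + 2 * A ^ 2 * η ^ 2)
          * ∑ i, q i * (⟪θ, x i⟫ - y i) ^ 2 := key
end
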